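/- arXiv:2501.05753 — 9 statements merged into one kernel-verified Lean document; each statement's English description precedes it below -/
import Mathlib

section
/- Let L be an additive commutative group, let β ∈ L, and let f : L → ℤ be an additive group homomorphism with f(β) = 2. Define s : L → L by s(ω) = ω − f(ω)·β, and let m : L → ℂ be a finitely supported function satisfying m(s(ω)) = m(ω) for all ω ∈ L. Then, in the group algebra ℂ[L], the element Σ_{ω ∈ supp(m)} m(ω)·f(ω)·e^{ω} is divisible by 1 − e^{−β}. -/
open AddMonoidAlgebra in
lemma key_dvd (L : Type*) [AddCommGroup L] (β : L) (n : ℤ) (ω : L) :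
    (1 - AddMonoidAlgebra.single (-β) (1 : ℂ)) ∣
      (AddMonoidAlgebra.single ω (1 : ℂ) - AddMonoidAlgebra.single (ω - n • β) 1) := by
  induction n using Int.induction_on with
  | zero => simp
  | succ k ih =>
      have h2 : (1 - AddMonoidAlgebra.single (-β) (1 : ℂ)) ∣
          (AddMonoidAlgebra.single (ω - (k : ℤ) • β) (1 : ℂ)
            - AddMonoidAlgebra.single (ω - ((k : ℤ) + 1) • β) 1) := by
        refine ⟨AddMonoidAlgebra.single (ω - (k : ℤ) • β) 1, ?_⟩
        rw [sub_mul, one_mul, AddMonoidAlgebra.single_mul_single, one_mul]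
        congr 2
        rw [add_smul, one_smul]; abel
      have := dvd_add ih h2
      simpa using this
  | pred k ih =>
      have h2 : (1 - AddMonoidAlgebra.single (-β) (1 : ℂ)) ∣
          (AddMonoidAlgebra.single (ω - (-(k : ℤ) - 1) • β) (1 : ℂ)
            - AddMonoidAlgebra.single (ω - (-(k : ℤ)) • β) 1) := by
        refine ⟨AddMonoidAlgebra.single (ω - (-(k : ℤ) - 1) • β) 1, ?_⟩
        rw [sub_mul, one_mul, AddMonoidAlgebra.single_mul_single, one_mul]
        congr 2
        rw [sub_smul, one_smul]; abel
      have := dvd_sub ih h2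
      simpa using this

/-- Let `L` be an additive commutative group, `β ∈ L`, and
`f : L → ℤ` an additive group homomorphism with `f β = 2`.  Let
`s ω = ω - f ω • β` and let `m : L → ℂ` be a finitely supported function
with `m (s ω) = m ω` for all `ω`.  Then in the group algebra `ℂ[L]`, the
element `∑_{ω ∈ supp m} m ω • f ω • e^ω` is divisible by `1 - e^{-β}`. -/
theorem stmt0 (L : Type*) [AddCommGroup L] (β : L) (f : L →+ ℤ) (hf : f β = 2)
    (m : L →₀ ℂ) (hm : ∀ ω : L, m (ω - f ω • β) = m ω) :
    (1 - AddMonoidAlgebra.single (-β) (1 : ℂ)) ∣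
      (∑ ω ∈ m.support, AddMonoidAlgebra.single ω (m ω * (f ω : ℂ)) :
        AddMonoidAlgebra ℂ L) := by
  set T : AddMonoidAlgebra ℂ L :=
    ∑ ω ∈ m.support, AddMonoidAlgebra.single ω (m ω * (f ω : ℂ)) with hT
  set D : AddMonoidAlgebra ℂ L := 1 - AddMonoidAlgebra.single (-β) (1 : ℂ) with hD
  have hfs : ∀ ω : L, f (ω - f ω • β) = - f ω := by
    intro ω
    simp [map_sub, map_zsmul, hf]; ring
  -- s is an involution preserving the support of m
  have hs_mem : ∀ ω ∈ m.support, ω - f ω • β ∈ m.support := by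
    intro ω hω
    simp only [Finsupp.mem_support_iff] at hω ⊢
    rw [hm ω]; exact hω
  have hs_inv : ∀ ω : L, (ω - f ω • β) - f (ω - f ω • β) • β = ω := by
    intro ω
    rw [hfs ω]
    simp
  -- reindexing: sum of single (s ω) (m ω * f ω) equals -T
  have hreindex :
      (∑ ω ∈ m.support, AddMonoidAlgebra.single (ω - f ω • β) (m ω * (f ω : ℂ))) = -T := by
    rw [hT, ← Finset.sum_neg_distrib]
    refine Finset.sum_nbij' (fun ω => ω - f ω • β) (fun ω => ω - f ω • β)
      (fun ω hω => hs_mem ω hω) (fun ω hω => hs_mem ω hω)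
      (fun ω _ => hs_inv ω) (fun ω _ => hs_inv ω) ?_
    intro ω hω
    rw [hm ω, hfs ω]
    push_cast
    rw [mul_neg]; simp [AddMonoidAlgebra.single]
  -- hence D divides 2 * T
  have h2T : D ∣ T - (-T) := by
    rw [← hreindex, hT, ← Finset.sum_sub_distrib]
    refine Finset.dvd_sum fun ω _ => ?_
    have hk := key_dvd L β (f ω) ω
    have : AddMonoidAlgebra.single ω (m ω * (f ω : ℂ))
        - AddMonoidAlgebra.single (ω - f ω • β) (m ω * (f ω : ℂ))
        = (m ω * (f ω : ℂ)) •
          (AddMonoidAlgebra.single ω (1:ℂ) - AddMonoidAlgebra.single (ω - f ω • β) 1) := by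
      rw [smul_sub, AddMonoidAlgebra.smul_single', AddMonoidAlgebra.smul_single', mul_one]
    rw [this, Algebra.smul_def]
    exact Dvd.dvd.mul_left hk _
  have h2T' : D ∣ (2 : ℂ) • T := by
    have : T - (-T) = (2 : ℂ) • T := by
      rw [sub_neg_eq_add, two_smul]
    rwa [this] at h2T
  have : T = (2⁻¹ : ℂ) • ((2 : ℂ) • T) := by
    rw [smul_smul]; norm_num
  rw [this, Algebra.smul_def]
  exact Dvd.dvd.mul_left h2T' _
end

section
/- Let V be a real inner product space, let β ∈ V be nonzero, and let m : V → ℂ be a finitely supported function such that m(s_β(ω)) = m(ω) for all ω ∈ V, where s_β(ω) = ω − (2⟨ω,β⟩/⟨β,β⟩)·β is the orthogonal reflection across the hyperplane β^⊥, and such that 2⟨ω,β⟩/⟨β,β⟩ ∈ ℤ for every ω in the support of m. Then for every ℝ-linear map φ : V → ℂ with φ(β) ∈ 2πi·ℤ, one has Σ_{ω ∈ supp(m)} m(ω)·⟨β,ω⟩·exp(φ(ω)) = 0. -/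
open scoped RealInnerProductSpace

/-- Let `V` be a real inner product space, `β ≠ 0`, and let
`m : V → ℂ` be finitely supported, invariant under the orthogonal reflection
`s_β (ω) = ω - (2⟪ω,β⟫/⟪β,β⟫) • β` across the hyperplane `β⊥`, and such that
`2⟪ω,β⟫/⟪β,β⟫ ∈ ℤ` for every `ω` in the support of `m`.  Then for every
`ℝ`-linear map `φ : V → ℂ` with `φ β ∈ 2πi·ℤ`, one has
`∑_{ω ∈ supp m} m ω • ⟪β,ω⟫ • exp (φ ω) = 0`. -/
theorem stmt1 (V : Type*) [NormedAddCommGroup V] [InnerProductSpace ℝ V]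
    (β : V) (hβ : β ≠ 0) (m : V →₀ ℂ)
    (hinv : ∀ ω : V, m (ω - (2 * ⟪ω, β⟫ / ⟪β, β⟫) • β) = m ω)
    (hint : ∀ ω ∈ m.support, ∃ n : ℤ, 2 * ⟪ω, β⟫ / ⟪β, β⟫ = (n : ℝ))
    (φ : V →ₗ[ℝ] ℂ) (hφ : ∃ n : ℤ, φ β = 2 * Real.pi * Complex.I * n) :
    ∑ ω ∈ m.support, m ω * (⟪β, ω⟫ : ℂ) * Complex.exp (φ ω) = 0 := by
  obtain ⟨k, hk⟩ := hφ
  have hββ : ⟪β, β⟫ ≠ 0 := inner_self_ne_zero.mpr hβ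
  set c : V → ℝ := fun ω => 2 * ⟪ω, β⟫ / ⟪β, β⟫ with hc
  set s : V → V := fun ω => ω - c ω • β with hs
  have hinner : ∀ ω : V, ⟪β, s ω⟫ = -⟪β, ω⟫ := by
    intro ω
    simp only [hs, inner_sub_right, real_inner_smul_right, hc]
    rw [real_inner_comm ω β]
    field_simp
    ring
  have hcs : ∀ ω : V, c (s ω) = - c ω := by
    intro ω
    have h := hinner ω
    rw [real_inner_comm (s ω) β, real_inner_comm ω β] at h
    simp only [hc]
    rw [h]
    ring
  have hss : ∀ ω : V, s (s ω) = ω := by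
    intro ω
    rw [hs]
    simp only [hcs ω]
    rw [show c (ω - c ω • β) = -c ω from hcs ω, neg_smul, sub_neg_eq_add, sub_add_cancel]
  have hms : ∀ ω : V, m (s ω) = m ω := fun ω => hinv ω
  refine Finset.sum_involution (fun ω _ => s ω) ?_ ?_ ?_ ?_
  · intro ω hω
    obtain ⟨n, hn⟩ := hint ω hω
    have hcn : c ω = (n : ℝ) := hn
    have hexp : Complex.exp (φ (s ω)) = Complex.exp (φ ω) := by
      have hφs : φ (s ω) = φ ω - (n : ℂ) * φ β := by
        rw [hs]
        simp only [map_sub, map_smul]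
        rw [hcn, Complex.real_smul]
        push_cast
        ring
      rw [hφs, hk,
        show φ ω - (n : ℂ) * (2 * Real.pi * Complex.I * k)
            = φ ω + ((-(n * k) : ℤ) : ℂ) * (2 * Real.pi * Complex.I) by push_cast; ring,
        Complex.exp_add, Complex.exp_int_mul_two_pi_mul_I, mul_one]
    show m ω * (⟪β, ω⟫ : ℂ) * Complex.exp (φ ω)
        + m (s ω) * (⟪β, s ω⟫ : ℂ) * Complex.exp (φ (s ω)) = 0
    rw [hms, hexp, hinner]
    push_cast
    ring
  · intro ω hω hne heq
    apply hne
    have heq' : ω - c ω • β = ω := heq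
    have hzero : c ω • β = 0 := by rwa [sub_eq_self] at heq'
    have hcz : c ω = 0 := by
      rcases smul_eq_zero.mp hzero with h | h
      · exact h
      · exact absurd h hβ
    have hiz : (⟪β, ω⟫ : ℝ) = 0 := by
      have h2 : 2 * ⟪ω, β⟫ / ⟪β, β⟫ = 0 := hcz
      rw [div_eq_zero_iff] at h2
      rcases h2 with h2 | h2
      · rw [real_inner_comm]; linarith
      · exact absurd h2 hββ
    simp [hiz]
  · intro ω hω
    simpa [Finsupp.mem_support_iff, hms] using hω
  · intro ω hω
    exact hss ω
end

section
/- For all i, j, k ∈ {1, …, l+1}, the function Υ_{ijk}(μ) tends to 0 as μ → 1 with μ ≠ 1, and tends to 0 as μ → −1 with μ ≠ −1. In particular Υ_{ijk} has removable singularities at μ = ±1 and its residues at μ = 1 and μ = −1 vanish. -/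
open Complex Filter Topology

/-- The factor `-κ_m/(μ-κ_m) + κ_m⁻¹/(μ-κ_m⁻¹)` for an index `m ≤ l`, and `1`
for the index `m = l+1`. -/
noncomputable def upsFactor (l : ℕ) (κ : ℕ → ℂ) (m : ℕ) (μ : ℂ) : ℂ :=
  if m ≤ l then -κ m / (μ - κ m) + (κ m)⁻¹ / (μ - (κ m)⁻¹) else 1

/-- The denominator
`D(μ) = ∑_{r=1}^l (1/(μ-κ_r) + 1/(μ-κ_r⁻¹)) - (l-2)/μ - 4μ/(μ²-1)`. -/
noncomputable def upsD (l : ℕ) (κ : ℕ → ℂ) (μ : ℂ) : ℂ :=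
  (∑ r ∈ Finset.Icc 1 l, (1 / (μ - κ r) + 1 / (μ - (κ r)⁻¹)))
    - ((l : ℂ) - 2) / μ - 4 * μ / (μ ^ 2 - 1)

/-- The integrand `Υ_{ijk}(μ) = -N_{ijk}(μ) / (2 μ² D(μ))` computing the residue
contributions to the dual Landau–Ginzburg product of the `D_l` relativistic
Toda spectral curve. -/
noncomputable def Ups (l : ℕ) (κ : ℕ → ℂ) (i j k : ℕ) (μ : ℂ) : ℂ :=
  -(upsFactor l κ i μ * upsFactor l κ j μ * upsFactor l κ k μ)
    / (2 * μ ^ 2 * upsD l κ μ)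

/-- `G(μ) = (μ²-1)·S(μ) - (l-2)(μ²-1)/μ - 4μ`, a regularized denominator. -/
noncomputable def upsG (l : ℕ) (κ : ℕ → ℂ) (μ : ℂ) : ℂ :=
  (μ ^ 2 - 1) * (∑ r ∈ Finset.Icc 1 l, (1 / (μ - κ r) + 1 / (μ - (κ r)⁻¹)))
    - ((l : ℂ) - 2) * (μ ^ 2 - 1) / μ - 4 * μ

lemma upsD_mul (l : ℕ) (κ : ℕ → ℂ) (μ : ℂ) (hc : μ ^ 2 - 1 ≠ 0) :
    upsD l κ μ * (μ ^ 2 - 1) = upsG l κ μ := by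
  unfold upsD upsG
  rw [sub_mul, sub_mul, div_mul_cancel₀ _ hc, div_mul_eq_mul_div]
  ring

lemma ups_eq (l : ℕ) (κ : ℕ → ℂ) (i j k : ℕ) (μ : ℂ) (h1 : μ ≠ 1) (h2 : μ ≠ -1) :
    Ups l κ i j k μ =
      -(upsFactor l κ i μ * upsFactor l κ j μ * upsFactor l κ k μ) * (μ ^ 2 - 1)
        / (2 * μ ^ 2 * upsG l κ μ) := by
  have hc : μ ^ 2 - 1 ≠ 0 := by
    have : μ ^ 2 - 1 = (μ - 1) * (μ + 1) := by ring
    rw [this]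
    exact mul_ne_zero (sub_ne_zero.mpr h1)
      (fun h => h2 (by linear_combination h))
  rw [Ups, ← mul_div_mul_right _ _ hc, mul_assoc (2 * μ ^ 2), upsD_mul l κ μ hc]

lemma factor_contAt (l : ℕ) (κ : ℕ → ℂ)
    (hκ : ∀ r ∈ Finset.Icc 1 l, κ r ≠ 0 ∧ κ r ≠ 1 ∧ κ r ≠ -1)
    (m : ℕ) (hm : m ∈ Finset.Icc 1 (l + 1)) (μ₀ : ℂ) (h0 : μ₀ = 1 ∨ μ₀ = -1) :
    ContinuousAt (upsFactor l κ m) μ₀ := by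
  by_cases h : m ≤ l
  · obtain ⟨hm0, hm1, hm2⟩ := hκ m (Finset.mem_Icc.mpr ⟨(Finset.mem_Icc.mp hm).1, h⟩)
    have e : upsFactor l κ m = fun μ =>
        -κ m / (μ - κ m) + (κ m)⁻¹ / (μ - (κ m)⁻¹) := by
      funext μ; simp [upsFactor, h]
    have hκne : μ₀ - κ m ≠ 0 := by
      rcases h0 with rfl | rfl
      · exact sub_ne_zero.mpr (Ne.symm hm1)
      · exact sub_ne_zero.mpr (Ne.symm hm2)
    have hκine : μ₀ - (κ m)⁻¹ ≠ 0 := by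
      rcases h0 with rfl | rfl
      · exact sub_ne_zero.mpr fun h => hm1 (inv_eq_one.mp h.symm)
      · refine sub_ne_zero.mpr fun h => hm2 ?_
        have h2 := h.symm
        rw [inv_eq_iff_eq_inv] at h2
        rw [h2]; norm_num
    rw [e]
    exact ((continuousAt_const.div (continuousAt_id.sub continuousAt_const) hκne).add
      (continuousAt_const.div (continuousAt_id.sub continuousAt_const) hκine))
  · have e : upsFactor l κ m = fun _ => (1 : ℂ) := by
      funext μ; simp [upsFactor, h]
    rw [e]; exact continuousAt_const

lemma sum_contAt (l : ℕ) (κ : ℕ → ℂ)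
    (hκ : ∀ r ∈ Finset.Icc 1 l, κ r ≠ 0 ∧ κ r ≠ 1 ∧ κ r ≠ -1)
    (μ₀ : ℂ) (h0 : μ₀ = 1 ∨ μ₀ = -1) :
    ContinuousAt (fun μ =>
      ∑ r ∈ Finset.Icc 1 l, (1 / (μ - κ r) + 1 / (μ - (κ r)⁻¹))) μ₀ := by
  apply tendsto_finset_sum
  intro r hr
  obtain ⟨hr0, hr1, hr2⟩ := hκ r hr
  have hκne : μ₀ - κ r ≠ 0 := by
    rcases h0 with rfl | rfl
    · exact sub_ne_zero.mpr (Ne.symm hr1)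
    · exact sub_ne_zero.mpr (Ne.symm hr2)
  have hκine : μ₀ - (κ r)⁻¹ ≠ 0 := by
    rcases h0 with rfl | rfl
    · exact sub_ne_zero.mpr fun h => hr1 (inv_eq_one.mp h.symm)
    · refine sub_ne_zero.mpr fun h => hr2 ?_
      have h2 := h.symm
      rw [inv_eq_iff_eq_inv] at h2
      rw [h2]; norm_num
  exact ((continuousAt_const.div (continuousAt_id.sub continuousAt_const) hκne).add
    (continuousAt_const.div (continuousAt_id.sub continuousAt_const) hκine))

lemma key (l : ℕ) (κ : ℕ → ℂ)
    (hκ : ∀ r ∈ Finset.Icc 1 l, κ r ≠ 0 ∧ κ r ≠ 1 ∧ κ r ≠ -1)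
    (i j k : ℕ) (hi : i ∈ Finset.Icc 1 (l + 1)) (hj : j ∈ Finset.Icc 1 (l + 1))
    (hk : k ∈ Finset.Icc 1 (l + 1)) (μ₀ : ℂ) (h0 : μ₀ = 1 ∨ μ₀ = -1) :
    Tendsto (Ups l κ i j k) (𝓝[≠] μ₀) (𝓝 0) := by
  have hμ0 : μ₀ ≠ 0 := by rcases h0 with rfl | rfl <;> norm_num
  have hsq : μ₀ ^ 2 - 1 = 0 := by rcases h0 with rfl | rfl <;> ring
  -- continuity of G at μ₀, with nonzero value
  have hGc : ContinuousAt (upsG l κ) μ₀ := by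
    unfold upsG
    exact (((continuousAt_id.pow 2).sub continuousAt_const).mul
        (sum_contAt l κ hκ μ₀ h0)).sub
        ((continuousAt_const.mul ((continuousAt_id.pow 2).sub continuousAt_const)).div
          continuousAt_id hμ0) |>.sub (continuousAt_const.mul continuousAt_id)
  have hGval : upsG l κ μ₀ = -4 * μ₀ := by
    unfold upsG; rw [hsq]; ring
  have hGne : upsG l κ μ₀ ≠ 0 := by
    rw [hGval]; exact mul_ne_zero (by norm_num) hμ0
  -- the regularized function
  set F : ℂ → ℂ := fun μ =>
    -(upsFactor l κ i μ * upsFactor l κ j μ * upsFactor l κ k μ) * (μ ^ 2 - 1)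
      / (2 * μ ^ 2 * upsG l κ μ) with hF
  have hFc : ContinuousAt F μ₀ := by
    apply ContinuousAt.div
    · exact ((factor_contAt l κ hκ i hi μ₀ h0).mul (factor_contAt l κ hκ j hj μ₀ h0)
        |>.mul (factor_contAt l κ hκ k hk μ₀ h0)).neg.mul
        ((continuousAt_id.pow 2).sub continuousAt_const)
    · exact (continuousAt_const.mul (continuousAt_id.pow 2)).mul hGc
    · exact mul_ne_zero (mul_ne_zero two_ne_zero (pow_ne_zero 2 hμ0)) hGne
  have hFval : F μ₀ = 0 := by
    simp only [hF, hsq, mul_zero, zero_div]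
  have hFt : Tendsto F (𝓝[≠] μ₀) (𝓝 0) := by
    have := hFc.tendsto
    rw [hFval] at this
    exact this.mono_left nhdsWithin_le_nhds
  apply hFt.congr'
  have h1 : ∀ᶠ μ in 𝓝[≠] μ₀, μ ≠ 1 ∧ μ ≠ -1 := by
    rcases h0 with rfl | rfl
    · filter_upwards [eventually_mem_nhdsWithin,
        eventually_ne_nhdsWithin (by norm_num : (1:ℂ) ≠ -1)] with μ hμ hμ'
      exact ⟨hμ, hμ'⟩
    · filter_upwards [eventually_mem_nhdsWithin,
        eventually_ne_nhdsWithin (by norm_num : (-1:ℂ) ≠ 1)] with μ hμ hμ'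
      exact ⟨hμ', hμ⟩
  filter_upwards [h1] with μ ⟨hμ1, hμ2⟩
  exact (ups_eq l κ i j k μ hμ1 hμ2).symm

/-- For all `i, j, k ∈ {1, …, l+1}`, the function `Υ_{ijk}(μ)`
tends to `0` as `μ → 1` with `μ ≠ 1`, and tends to `0` as `μ → -1` with
`μ ≠ -1`; in particular it has removable singularities at `μ = ±1` and its
residues there vanish. -/
theorem stmt2 (l : ℕ) (hl : 3 ≤ l) (κ : ℕ → ℂ)
    (hκ : ∀ r ∈ Finset.Icc 1 l, κ r ≠ 0 ∧ κ r ≠ 1 ∧ κ r ≠ -1)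
    (hκ' : ∀ r ∈ Finset.Icc 1 l, ∀ s ∈ Finset.Icc 1 l, r ≠ s →
      κ r ≠ κ s ∧ κ r * κ s ≠ 1)
    (i j k : ℕ) (hi : i ∈ Finset.Icc 1 (l + 1)) (hj : j ∈ Finset.Icc 1 (l + 1))
    (hk : k ∈ Finset.Icc 1 (l + 1)) :
    Tendsto (Ups l κ i j k) (𝓝[≠] 1) (𝓝 0) ∧
      Tendsto (Ups l κ i j k) (𝓝[≠] (-1)) (𝓝 0) := by
  exact ⟨key l κ hκ i j k hi hj hk 1 (Or.inl rfl), key l κ hκ i j k hi hj hk (-1) (Or.inr rfl)⟩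
end

section
/- For all i, j, k ∈ {1, …, l+1}, the limit of μ·Υ_{ijk}(μ) as μ → 0 with μ ≠ 0 exists; it equals 1/(2(l−2)) when i = j = k = l+1, and it equals 0 otherwise. Consequently the residue of Υ_{ijk} at μ = 0 is δ_{i,l+1}·δ_{j,l+1}·δ_{k,l+1}/(2(l−2)). -/
open Complex Filter Topology

/-- For all `i, j, k ∈ {1, …, l+1}`, the limit of
`μ · Υ_{ijk}(μ)` as `μ → 0`, `μ ≠ 0`, exists; it equals `1/(2(l-2))` when
`i = j = k = l+1` and `0` otherwise.  Consequently the residue of `Υ_{ijk}`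
at `μ = 0` is `δ_{i,l+1} δ_{j,l+1} δ_{k,l+1} / (2(l-2))`. -/
theorem stmt3 (l : ℕ) (hl : 3 ≤ l) (κ : ℕ → ℂ)
    (hκ : ∀ r ∈ Finset.Icc 1 l, κ r ≠ 0 ∧ κ r ≠ 1 ∧ κ r ≠ -1)
    (hκ' : ∀ r ∈ Finset.Icc 1 l, ∀ s ∈ Finset.Icc 1 l, r ≠ s →
      κ r ≠ κ s ∧ κ r * κ s ≠ 1)
    (i j k : ℕ) (hi : i ∈ Finset.Icc 1 (l + 1)) (hj : j ∈ Finset.Icc 1 (l + 1))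
    (hk : k ∈ Finset.Icc 1 (l + 1)) :
    Tendsto (fun μ : ℂ => μ * Ups l κ i j k μ) (𝓝[≠] 0)
      (𝓝 (if i = l + 1 ∧ j = l + 1 ∧ k = l + 1
            then 1 / (2 * ((l : ℂ) - 2)) else 0)) := by
  have hl2 : ((l : ℂ) - 2) ≠ 0 := by
    intro h
    rw [sub_eq_zero] at h
    have : l = 2 := by exact_mod_cast h
    omega
  have hi1 : 1 ≤ i := (Finset.mem_Icc.mp hi).1
  have hj1 : 1 ≤ j := (Finset.mem_Icc.mp hj).1
  have hk1 : 1 ≤ k := (Finset.mem_Icc.mp hk).1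
  have hi2 : i ≤ l + 1 := (Finset.mem_Icc.mp hi).2
  have hj2 : j ≤ l + 1 := (Finset.mem_Icc.mp hj).2
  have hk2 : k ≤ l + 1 := (Finset.mem_Icc.mp hk).2
  set S : ℂ → ℂ := fun μ => ∑ r ∈ Finset.Icc 1 l, (1 / (μ - κ r) + 1 / (μ - (κ r)⁻¹)) with hS
  set Q : ℂ → ℂ := fun μ => μ * S μ - ((l : ℂ) - 2) - 4 * μ ^ 2 / (μ ^ 2 - 1) with hQdef
  set G : ℂ → ℂ := fun μ =>
    -(upsFactor l κ i μ * upsFactor l κ j μ * upsFactor l κ k μ) / (2 * Q μ) with hGdef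
  -- eventual equality
  have heq : ∀ μ : ℂ, μ ≠ 0 → μ * Ups l κ i j k μ = G μ := by
    intro μ hμ
    have hQ : μ * upsD l κ μ = Q μ := by
      simp only [upsD, hQdef, hS, mul_sub, one_div]
      rw [mul_div_cancel₀ _ hμ, mul_div_assoc']
      ring_nf
    have hden : 2 * μ ^ 2 * upsD l κ μ = μ * (2 * Q μ) := by
      rw [← hQ]; ring
    rw [Ups, hden, ← mul_div_assoc, mul_div_mul_left _ _ hμ, hGdef]
  -- nonvanishing of κ
  have hκ0 : ∀ m, 1 ≤ m → m ≤ l → κ m ≠ 0 :=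
    fun m h1 h2 => (hκ m (Finset.mem_Icc.mpr ⟨h1, h2⟩)).1
  -- continuity of factors at 0
  have hFcont : ∀ m, 1 ≤ m → ContinuousAt (fun μ => upsFactor l κ m μ) 0 := by
    intro m h1
    by_cases hm : m ≤ l
    · have h0 : κ m ≠ 0 := hκ0 m h1 hm
      simp only [upsFactor, if_pos hm]
      apply ContinuousAt.add
      · exact ContinuousAt.div continuousAt_const (by fun_prop)
          (by simpa using neg_ne_zero.mpr h0)
      · exact ContinuousAt.div continuousAt_const (by fun_prop)
          (by simpa using neg_ne_zero.mpr (inv_ne_zero h0))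
    · simp only [upsFactor, if_neg hm]
      exact continuousAt_const
  -- value of factors at 0
  have hFval : ∀ m, 1 ≤ m → m ≤ l + 1 →
      upsFactor l κ m 0 = if m = l + 1 then 1 else 0 := by
    intro m h1 h2
    by_cases hm : m ≤ l
    · have h0 : κ m ≠ 0 := hκ0 m h1 hm
      have hne : m ≠ l + 1 := by omega
      simp only [upsFactor, if_pos hm, if_neg hne, zero_sub]
      field_simp
      norm_num
    · have : m = l + 1 := by omega
      simp [upsFactor, hm, this]
  -- continuity of S at 0
  have hScont : ContinuousAt S 0 := by
    apply tendsto_finset_sum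
    intro r hr
    have h0 : κ r ≠ 0 := hκ0 r (Finset.mem_Icc.mp hr).1 (Finset.mem_Icc.mp hr).2
    apply ContinuousAt.add
    · exact ContinuousAt.div continuousAt_const (by fun_prop)
        (by simpa using neg_ne_zero.mpr h0)
    · exact ContinuousAt.div continuousAt_const (by fun_prop)
        (by simpa using neg_ne_zero.mpr (inv_ne_zero h0))
  -- continuity of Q at 0 and value
  have hQ0 : Q 0 = -((l : ℂ) - 2) := by
    simp [hQdef]
  have hQcont : ContinuousAt Q 0 := by
    apply ContinuousAt.sub
    apply ContinuousAt.sub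
    · exact ContinuousAt.mul continuousAt_id hScont
    · exact continuousAt_const
    · apply ContinuousAt.div (by fun_prop) (by fun_prop)
      norm_num
  have h2Q0 : 2 * Q 0 ≠ 0 := by
    rw [hQ0]
    exact mul_ne_zero two_ne_zero (neg_ne_zero.mpr hl2)
  have hGcont : ContinuousAt G 0 := by
    apply ContinuousAt.div
    · exact ContinuousAt.neg (((hFcont i hi1).mul (hFcont j hj1)).mul (hFcont k hk1))
    · exact continuousAt_const.mul hQcont
    · exact h2Q0
  have hG0 : G 0 = (if i = l + 1 ∧ j = l + 1 ∧ k = l + 1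
      then 1 / (2 * ((l : ℂ) - 2)) else 0) := by
    simp only [hGdef, hFval i hi1 hi2, hFval j hj1 hj2, hFval k hk1 hk2, hQ0]
    by_cases h : i = l + 1 ∧ j = l + 1 ∧ k = l + 1
    · obtain ⟨h1, h2, h3⟩ := h
      rw [if_pos h1, if_pos h2, if_pos h3,
        if_pos (show i = l + 1 ∧ j = l + 1 ∧ k = l + 1 from ⟨h1, h2, h3⟩)]
      rw [div_eq_div_iff (mul_ne_zero two_ne_zero (neg_ne_zero.mpr hl2))
        (mul_ne_zero two_ne_zero hl2)]
      ring
    · rw [if_neg h]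
      rcases not_and_or.mp h with h' | h'
      · simp [if_neg h']
      rcases not_and_or.mp h' with h'' | h''
      · simp [if_neg h'']
      · simp [if_neg h'']
  have := (hGcont.tendsto.mono_left nhdsWithin_le_nhds : Tendsto G (𝓝[≠] (0:ℂ)) (𝓝 (G 0)))
  rw [hG0] at this
  refine this.congr' ?_
  filter_upwards [self_mem_nhdsWithin] with μ hμ
  exact (heq μ hμ).symm
end

section
/- For all i, j, k ∈ {1, …, l+1}, the function μ·Υ_{ijk}(μ) tends, as |μ| → ∞, to −1/(2(l−2)) when i = j = k = l+1, and to 0 otherwise. Consequently the residue of Υ_{ijk} at infinity (defined as −lim_{|μ|→∞} μ·Υ_{ijk}(μ)) equals δ_{i,l+1}·δ_{j,l+1}·δ_{k,l+1}/(2(l−2)). -/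
open Complex Filter Topology

private lemma aux_abs_atTop :
    Tendsto (fun μ : ℂ => ‖μ‖) (comap (fun z : ℂ => ‖z‖) atTop) atTop := by
  simpa using
    (tendsto_comap : Tendsto (fun z : ℂ => ‖z‖) (comap (fun z : ℂ => ‖z‖) atTop) atTop)

private lemma aux_inv (c : ℂ) :
    Tendsto (fun μ : ℂ => (μ - c)⁻¹) (comap (fun z : ℂ => ‖z‖) atTop) (𝓝 0) := by
  rw [tendsto_zero_iff_norm_tendsto_zero]
  have h1 : Tendsto (fun μ : ℂ => ‖μ - c‖) (comap (fun z : ℂ => ‖z‖) atTop) atTop := by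
    apply tendsto_atTop_mono (fun μ => norm_sub_norm_le μ c)
    exact tendsto_atTop_add_const_right _ (-‖c‖) aux_abs_atTop |>.congr (by intro x; ring)
  simpa [Function.comp_def] using tendsto_inv_atTop_zero.comp h1

private lemma aux_ne (c : ℂ) : ∀ᶠ μ : ℂ in comap (fun z : ℂ => ‖z‖) atTop, μ ≠ c := by
  filter_upwards [aux_abs_atTop.eventually_gt_atTop ‖c‖] with μ hμ
  intro h; rw [h] at hμ; exact lt_irrefl _ hμ

private lemma aux_ratio (c : ℂ) :
    Tendsto (fun μ : ℂ => μ / (μ - c)) (comap (fun z : ℂ => ‖z‖) atTop) (𝓝 1) := by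
  have h2 : Tendsto (fun μ : ℂ => 1 + c * (μ - c)⁻¹) (comap (fun z : ℂ => ‖z‖) atTop) (𝓝 1) := by
    simpa using tendsto_const_nhds.add ((aux_inv c).const_mul c)
  apply h2.congr'
  filter_upwards [aux_ne c] with μ hμ
  have h0 : μ - c ≠ 0 := sub_ne_zero.mpr hμ
  field_simp
  ring

/-- For all `i, j, k ∈ {1, …, l+1}`, the function
`μ · Υ_{ijk}(μ)` tends, as `|μ| → ∞`, to `-1/(2(l-2))` when `i = j = k = l+1`
and to `0` otherwise.  Consequently the residue of `Υ_{ijk}` at infinity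
(defined as `-lim_{|μ|→∞} μ·Υ_{ijk}(μ)`) equals
`δ_{i,l+1} δ_{j,l+1} δ_{k,l+1} / (2(l-2))`. -/
theorem stmt4 (l : ℕ) (hl : 3 ≤ l) (κ : ℕ → ℂ)
    (hκ : ∀ r ∈ Finset.Icc 1 l, κ r ≠ 0 ∧ κ r ≠ 1 ∧ κ r ≠ -1)
    (hκ' : ∀ r ∈ Finset.Icc 1 l, ∀ s ∈ Finset.Icc 1 l, r ≠ s →
      κ r ≠ κ s ∧ κ r * κ s ≠ 1)
    (i j k : ℕ) (hi : i ∈ Finset.Icc 1 (l + 1)) (hj : j ∈ Finset.Icc 1 (l + 1))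
    (hk : k ∈ Finset.Icc 1 (l + 1)) :
    Tendsto (fun μ : ℂ => μ * Ups l κ i j k μ)
      (Filter.comap (fun z : ℂ => ‖z‖) Filter.atTop)
      (𝓝 (if i = l + 1 ∧ j = l + 1 ∧ k = l + 1
            then -(1 / (2 * ((l : ℂ) - 2))) else 0)) := by
  set L := Filter.comap (fun z : ℂ => ‖z‖) Filter.atTop with hL
  -- limit of each factor
  have hfac : ∀ m : ℕ, Tendsto (fun μ => upsFactor l κ m μ) L
      (𝓝 (if m ≤ l then 0 else 1)) := by
    intro m
    by_cases hm : m ≤ l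
    · simp only [upsFactor, if_pos hm]
      have h1 : Tendsto (fun μ : ℂ => -κ m / (μ - κ m)) L (𝓝 0) := by
        simpa [div_eq_mul_inv, hL] using ((aux_inv (κ m)).const_mul (-κ m))
      have h2 : Tendsto (fun μ : ℂ => (κ m)⁻¹ / (μ - (κ m)⁻¹)) L (𝓝 0) := by
        simpa [div_eq_mul_inv, hL] using ((aux_inv (κ m)⁻¹).const_mul (κ m)⁻¹)
      simpa using h1.add h2
    · simp only [upsFactor, if_neg hm]
      exact tendsto_const_nhds
  -- limit of μ * D(μ)
  have hD : Tendsto (fun μ => μ * upsD l κ μ) L (𝓝 ((l : ℂ) - 2)) := by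
    have hrw : (fun μ : ℂ => μ * upsD l κ μ) =
        fun μ => (∑ r ∈ Finset.Icc 1 l, (μ / (μ - κ r) + μ / (μ - (κ r)⁻¹)))
          - μ * (((l : ℂ) - 2) / μ) - μ * (4 * μ / (μ ^ 2 - 1)) := by
      funext μ
      simp only [upsD, mul_sub, Finset.mul_sum]
      congr 1
      congr 1
      exact Finset.sum_congr rfl (fun r _ => by ring)
    rw [hrw]
    have hsum : Tendsto (fun μ : ℂ =>
        ∑ r ∈ Finset.Icc 1 l, (μ / (μ - κ r) + μ / (μ - (κ r)⁻¹))) L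
        (𝓝 (∑ _r ∈ Finset.Icc 1 l, (2 : ℂ))) := by
      apply tendsto_finset_sum
      intro r _
      have := (aux_ratio (κ r)).add (aux_ratio (κ r)⁻¹)
      norm_num [hL] at this ⊢
      exact this
    have hmid : Tendsto (fun μ : ℂ => μ * (((l : ℂ) - 2) / μ)) L (𝓝 ((l : ℂ) - 2)) := by
      apply tendsto_const_nhds.congr'
      filter_upwards [aux_ne 0] with μ hμ
      field_simp
    have hlast : Tendsto (fun μ : ℂ => μ * (4 * μ / (μ ^ 2 - 1))) L (𝓝 4) := by
      have hinv2 : Tendsto (fun μ : ℂ => (μ ^ 2 - 1)⁻¹) L (𝓝 0) := by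
        have heq : (fun μ : ℂ => (μ ^ 2 - 1)⁻¹) =
            fun μ => (μ - 1)⁻¹ * (μ - (-1))⁻¹ := by
          funext μ; rw [← mul_inv]; congr 1; ring
        rw [heq]
        simpa [hL] using (aux_inv 1).mul (aux_inv (-1))
      have h4 : Tendsto (fun μ : ℂ => 4 + 4 * (μ ^ 2 - 1)⁻¹) L (𝓝 4) := by
        simpa using tendsto_const_nhds.add (hinv2.const_mul 4)
      apply h4.congr'
      filter_upwards [aux_ne 1, aux_ne (-1)] with μ h1 h2
      have : μ ^ 2 - 1 ≠ 0 := by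
        intro h
        have : (μ - 1) * (μ + 1) = 0 := by rw [← h]; ring
        rcases mul_eq_zero.mp this with h' | h'
        · exact h1 (by linear_combination h')
        · exact h2 (by linear_combination h')
      field_simp
      ring
    have := (hsum.sub hmid).sub hlast
    convert this using 2
    rw [Finset.sum_const, Nat.card_Icc]
    push_cast
    ring
  -- main limit
  have hl2 : (2 : ℂ) * ((l : ℂ) - 2) ≠ 0 := by
    have : (l : ℂ) ≠ 2 := by
      intro h
      have : (l : ℂ) = ((2 : ℕ) : ℂ) := by push_cast; exact h
      have := Nat.cast_injective this
      omega
    intro h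
    rcases mul_eq_zero.mp h with h' | h'
    · norm_num at h'
    · exact this (by linear_combination h')
  have key : Tendsto (fun μ : ℂ =>
      -(upsFactor l κ i μ * upsFactor l κ j μ * upsFactor l κ k μ)
        / (2 * (μ * upsD l κ μ))) L
      (𝓝 (-((if i ≤ l then 0 else 1) * (if j ≤ l then 0 else 1) *
            (if k ≤ l then 0 else 1)) / (2 * ((l : ℂ) - 2)))) := by
    exact Tendsto.div (((hfac i).mul (hfac j)).mul (hfac k)).neg (hD.const_mul 2) hl2
  have heq : Tendsto (fun μ : ℂ => μ * Ups l κ i j k μ) L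
      (𝓝 (-((if i ≤ l then 0 else 1) * (if j ≤ l then 0 else 1) *
            (if k ≤ l then 0 else 1)) / (2 * ((l : ℂ) - 2)))) := by
    apply key.congr'
    filter_upwards [aux_ne 0] with μ hμ
    simp only [Ups]
    by_cases hD0 : upsD l κ μ = 0
    · simp [hD0]
    · field_simp
  convert heq using 2
  simp only [Finset.mem_Icc] at hi hj hk
  have e1 : i = l + 1 ↔ ¬ i ≤ l := by omega
  have e2 : j = l + 1 ↔ ¬ j ≤ l := by omega
  have e3 : k = l + 1 ↔ ¬ k ≤ l := by omega
  by_cases h1 : i ≤ l <;> by_cases h2 : j ≤ l <;> by_cases h3 : k ≤ l <;>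
    simp [e1, e2, e3, h1, h2, h3, neg_div]
end

section
/- For every m ∈ {1, …, l}, the sum of the residues of Υ_{m,m,m} at μ = κ_m and at μ = κ_m^{−1} exists and equals q_m := Σ_{n=1,…,l, n≠m} κ_n(1 − κ_m²)/((κ_m − κ_n)(κ_m·κ_n − 1)). Precisely: there exists ε > 0 such that for every r with 0 < r < ε, (2πi)^{−1}·(∮_{|μ−κ_m|=r} Υ_{m,m,m}(μ) dμ + ∮_{|μ−κ_m^{−1}|=r} Υ_{m,m,m}(μ) dμ) = q_m. -/
open Complex Filter Topology

/-- A second-order-pole residue formula: if `f` is holomorphic on a closed disc, then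
`(2πi)⁻¹ ∮ (z-c)⁻² f(z) dz = f'(c)` over circles inside the disc. -/
private lemma residue2 (f : ℂ → ℂ) (c : ℂ) (R : ℝ) (hR : 0 < R)
    (hf : DifferentiableOn ℂ f (Metric.closedBall c R)) (r : ℝ) (hr : 0 < r) (hrR : r ≤ R) :
    (2 * Real.pi * Complex.I)⁻¹ *
      (∮ z in C(c, r), (z - c)⁻¹ * ((z - c)⁻¹ * f z)) = deriv f c := by
  lift r to NNReal using hr.le with r' hr'
  have hr0 : (0 : ℝ) < r' := hr
  have hf' : DifferentiableOn ℂ f (Metric.closedBall c r') :=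
    hf.mono (Metric.closedBall_subset_closedBall hrR)
  have hball := hf'.hasFPowerSeriesOnBall (by exact_mod_cast hr0)
  have hd := hball.hasFPowerSeriesAt.deriv
  rw [hd, cauchyPowerSeries_apply]
  simp only [pow_one, one_div, smul_eq_mul, one_mul]

private lemma sq1 (μ : ℂ) (h1 : μ ≠ 1) (h2 : μ ≠ -1) : μ ^ 2 - 1 ≠ 0 := by
  have h : μ ^ 2 - 1 = (μ - 1) * (μ + 1) := by ring
  rw [h]
  exact mul_ne_zero (sub_ne_zero.2 h1) (fun h => h2 (eq_neg_of_add_eq_zero_left h))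

/-- The regular part of `upsD` near `κ m` and `κ m⁻¹`. -/
noncomputable def Eaux (l : ℕ) (κ : ℕ → ℂ) (m : ℕ) (μ : ℂ) : ℂ :=
  (∑ n ∈ (Finset.Icc 1 l).erase m, (1 / (μ - κ n) + 1 / (μ - (κ n)⁻¹)))
    - ((l : ℂ) - 2) / μ - 4 * μ / (μ ^ 2 - 1)

private lemma Eaux_diffAt (l : ℕ) (κ : ℕ → ℂ) (m : ℕ) (μ : ℂ) (h0 : μ ≠ 0) (h1 : μ ≠ 1)
    (h2 : μ ≠ -1)
    (h : ∀ n ∈ (Finset.Icc 1 l).erase m, μ - κ n ≠ 0 ∧ μ - (κ n)⁻¹ ≠ 0) :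
    DifferentiableAt ℂ (Eaux l κ m) μ := by
  unfold Eaux
  refine DifferentiableAt.sub (DifferentiableAt.sub ?_ ?_) ?_
  · refine DifferentiableAt.fun_sum fun n hn => DifferentiableAt.add ?_ ?_
    · exact (differentiableAt_const _).div (differentiableAt_id.sub_const _) (h n hn).1
    · exact (differentiableAt_const _).div (differentiableAt_id.sub_const _) (h n hn).2
  · exact (differentiableAt_const _).div differentiableAt_id h0
  · exact ((differentiableAt_const _).mul differentiableAt_id).div
      ((differentiableAt_id.pow 2).sub_const 1) (sq1 μ h1 h2)

private lemma loc1 (z a b e : ℂ) (hu : z - a ≠ 0) (hv : z - b ≠ 0) (hz : z ≠ 0)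
    (hG : 1 + (z - a) * (1 / (z - b) + e) ≠ 0) :
    -((-a / (z - a) + b / (z - b)) * (-a / (z - a) + b / (z - b)) *
        (-a / (z - a) + b / (z - b))) / (2 * z ^ 2 * (1 / (z - a) + 1 / (z - b) + e)) =
    (z - a)⁻¹ * ((z - a)⁻¹ *
      (-(-a + b * (z - a) / (z - b)) ^ 3 /
        (2 * z ^ 2 * (1 + (z - a) * (1 / (z - b) + e))))) := by
  have hGD : 1 + (z - a) * (1 / (z - b) + e) = (z - a) * (1 / (z - a) + 1 / (z - b) + e) := by
    field_simp; ring
  have hP : -a + b * (z - a) / (z - b) = (z - a) * (-a / (z - a) + b / (z - b)) := by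
    field_simp
  have hD : 1 / (z - a) + 1 / (z - b) + e ≠ 0 := by
    intro h; rw [hGD, h, mul_zero] at hG; exact hG rfl
  rw [hP, hGD]
  generalize -a / (z - a) + b / (z - b) = F
  generalize hDD : 1 / (z - a) + 1 / (z - b) + e = DD at hD ⊢
  generalize hUU : z - a = U at hu ⊢
  rw [inv_mul_eq_div, inv_mul_eq_div, div_div, div_div,
    show -(U * F) ^ 3 = -(F * F * F) * U ^ 3 from by ring,
    show 2 * z ^ 2 * (U * DD) * (U * U) = 2 * z ^ 2 * DD * U ^ 3 from by ring,
    mul_div_mul_right _ _ (pow_ne_zero 3 hu)]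

private lemma loc2 (z a b e : ℂ) (hu : z - a ≠ 0) (hv : z - b ≠ 0) (hz : z ≠ 0)
    (hG : 1 + (z - b) * (1 / (z - a) + e) ≠ 0) :
    -((-a / (z - a) + b / (z - b)) * (-a / (z - a) + b / (z - b)) *
        (-a / (z - a) + b / (z - b))) / (2 * z ^ 2 * (1 / (z - a) + 1 / (z - b) + e)) =
    (z - b)⁻¹ * ((z - b)⁻¹ *
      (-(b + -a * (z - b) / (z - a)) ^ 3 /
        (2 * z ^ 2 * (1 + (z - b) * (1 / (z - a) + e))))) := by
  have hGD : 1 + (z - b) * (1 / (z - a) + e) = (z - b) * (1 / (z - a) + 1 / (z - b) + e) := by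
    field_simp; ring
  have hP : b + -a * (z - b) / (z - a) = (z - b) * (-a / (z - a) + b / (z - b)) := by
    field_simp; ring
  have hD : 1 / (z - a) + 1 / (z - b) + e ≠ 0 := by
    intro h; rw [hGD, h, mul_zero] at hG; exact hG rfl
  rw [hP, hGD]
  generalize -a / (z - a) + b / (z - b) = F
  generalize hDD : 1 / (z - a) + 1 / (z - b) + e = DD at hD ⊢
  generalize hUU : z - b = U at hv ⊢
  rw [inv_mul_eq_div, inv_mul_eq_div, div_div, div_div,
    show -(U * F) ^ 3 = -(F * F * F) * U ^ 3 from by ring,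
    show 2 * z ^ 2 * (U * DD) * (U * U) = 2 * z ^ 2 * DD * U ^ 3 from by ring,
    mul_div_mul_right _ _ (pow_ne_zero 3 hv)]

private lemma diffAt_aux (A B c w : ℂ) (E : ℂ → ℂ) (x : ℂ) (hw : x - w ≠ 0) (hx : x ≠ 0)
    (hE : DifferentiableAt ℂ E x)
    (hQ : 1 + (x - c) * (1 / (x - w) + E x) ≠ 0) :
    DifferentiableAt ℂ (fun μ => -(A + B * (μ - c) / (μ - w)) ^ 3 /
        (2 * μ ^ 2 * (1 + (μ - c) * (1 / (μ - w) + E μ)))) x := by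
  have h1 : DifferentiableAt ℂ (fun μ : ℂ => μ - w) x := differentiableAt_id.sub_const w
  have hP : DifferentiableAt ℂ (fun μ : ℂ => A + B * (μ - c) / (μ - w)) x :=
    (differentiableAt_const A).add
      (((differentiableAt_const B).mul (differentiableAt_id.sub_const c)).div h1 hw)
  have hGd : DifferentiableAt ℂ (fun μ : ℂ => 1 + (μ - c) * (1 / (μ - w) + E μ)) x :=
    (differentiableAt_const 1).add ((differentiableAt_id.sub_const c).mul
      (((differentiableAt_const 1).div h1 hw).add hE))
  exact ((hP.pow 3).neg).div (((differentiableAt_const 2).mul (differentiableAt_id.pow 2)).mul hGd)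
    (mul_ne_zero (mul_ne_zero two_ne_zero (pow_ne_zero 2 hx)) hQ)

set_option maxHeartbeats 1000000 in
private lemma hasDerivAt_aux (A B c w ed : ℂ) (hw : c - w ≠ 0) (hc : c ≠ 0) (E : ℂ → ℂ)
    (hE : HasDerivAt E ed c) :
    HasDerivAt (fun μ => -(A + B * (μ - c) / (μ - w)) ^ 3 /
        (2 * μ ^ 2 * (1 + (μ - c) * (1 / (μ - w) + E μ))))
      (-((3 * A ^ 2 * (B / (c - w)) * c ^ 2 -
          A ^ 3 * (2 * c + c ^ 2 * (1 / (c - w) + E c))) / (2 * c ^ 4))) c := by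
  have h1 : HasDerivAt (fun μ : ℂ => μ - w) 1 c := (hasDerivAt_id c).sub_const w
  have h2 : HasDerivAt (fun μ : ℂ => B * (μ - c)) B c := by
    simpa using ((hasDerivAt_id c).sub_const c).const_mul B
  have hq : HasDerivAt (fun μ : ℂ => B * (μ - c) / (μ - w))
      ((B * (c - w) - B * (c - c) * 1) / (c - w) ^ 2) c := h2.div h1 hw
  have hP : HasDerivAt (fun μ : ℂ => A + B * (μ - c) / (μ - w))
      ((B * (c - w) - B * (c - c) * 1) / (c - w) ^ 2) c := hq.const_add A
  have hinv : HasDerivAt (fun μ : ℂ => 1 / (μ - w))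
      ((0 * (c - w) - 1 * 1) / (c - w) ^ 2) c := (hasDerivAt_const c 1).div h1 hw
  have hGin : HasDerivAt (fun μ : ℂ => 1 / (μ - w) + E μ)
      ((0 * (c - w) - 1 * 1) / (c - w) ^ 2 + ed) c := hinv.add hE
  have hG : HasDerivAt (fun μ : ℂ => 1 + (μ - c) * (1 / (μ - w) + E μ))
      (1 * (1 / (c - w) + E c) + (c - c) * ((0 * (c - w) - 1 * 1) / (c - w) ^ 2 + ed)) c :=
    (((hasDerivAt_id c).sub_const c).mul hGin).const_add 1
  have hden : HasDerivAt (fun μ : ℂ => 2 * μ ^ 2 * (1 + (μ - c) * (1 / (μ - w) + E μ)))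
      ((2 * ((2 : ℕ) * c ^ (2 - 1))) * (1 + (c - c) * (1 / (c - w) + E c)) +
        (2 * c ^ 2) * (1 * (1 / (c - w) + E c) +
          (c - c) * ((0 * (c - w) - 1 * 1) / (c - w) ^ 2 + ed))) c :=
    ((hasDerivAt_pow 2 c).const_mul 2).mul hG
  have hQne : 2 * c ^ 2 * (1 + (c - c) * (1 / (c - w) + E c)) ≠ 0 := by
    rw [sub_self, zero_mul, add_zero, mul_one]
    exact mul_ne_zero two_ne_zero (pow_ne_zero 2 hc)
  have hnum : HasDerivAt (fun μ : ℂ => -(A + B * (μ - c) / (μ - w)) ^ 3)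
      (-(((3 : ℕ) * (A + B * (c - c) / (c - w)) ^ (3 - 1)) *
        ((B * (c - w) - B * (c - c) * 1) / (c - w) ^ 2))) c := (hP.pow 3).neg
  have hfin := hnum.div hden hQne
  refine hfin.congr_deriv ?_
  norm_num
  field_simp
  ring

private lemma perterm (a k : ℂ) (ha : a ≠ 0) (hk : k ≠ 0) (h1 : a - k ≠ 0) (h2 : a * k - 1 ≠ 0) :
    k * (1 - a ^ 2) / ((a - k) * (a * k - 1)) =
      -(a / 2) * (1 / (a - k) + 1 / (a - k⁻¹)) +
        a⁻¹ / 2 * (1 / (a⁻¹ - k) + 1 / (a⁻¹ - k⁻¹)) := by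
  rw [show a - k⁻¹ = (a * k - 1) / k from by field_simp,
    show a⁻¹ - k = -((a * k - 1) / a) from by field_simp; try ring,
    show a⁻¹ - k⁻¹ = -((a - k) / (a * k)) from by field_simp; try ring,
    div_neg, div_neg, one_div_div, one_div_div, one_div_div, inv_eq_one_div a,
    div_eq_iff (mul_ne_zero h1 h2)]
  have h2' : k * a - 1 ≠ 0 := by rwa [mul_comm]
  field_simp
  ring

private lemma finalg1 (a S₁ L : ℂ) (ha : a ≠ 0) (hsq : a ^ 2 - 1 ≠ 0) :
    -((3 * (-a) ^ 2 * (a⁻¹ / (a - a⁻¹)) * a ^ 2 -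
        (-a) ^ 3 * (2 * a + a ^ 2 * (1 / (a - a⁻¹) +
          (S₁ - (L - 2) / a - 4 * a / (a ^ 2 - 1))))) / (2 * a ^ 4)) =
    (L - 1 - a * S₁) / 2 := by
  rw [show a - a⁻¹ = (a ^ 2 - 1) / a from by field_simp; try ring,
    div_div_eq_mul_div, one_div_div, ← neg_div,
    div_eq_div_iff (mul_ne_zero two_ne_zero (pow_ne_zero 4 ha)) (two_ne_zero)]
  field_simp
  ring

private lemma finalg2 (x b S₂ L : ℂ) (hb : b ≠ 0) (hxb : x * b = 1) (hsq : b ^ 2 - 1 ≠ 0) :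
    -((3 * b ^ 2 * (-x / (b - x)) * b ^ 2 -
        b ^ 3 * (2 * b + b ^ 2 * (1 / (b - x) +
          (S₂ - (L - 2) / b - 4 * b / (b ^ 2 - 1))))) / (2 * b ^ 4)) =
    (1 - L + b * S₂) / 2 := by
  rw [show x = 1 / b from by rw [eq_div_iff hb]; linear_combination hxb,
    show b - 1 / b = (b ^ 2 - 1) / b from by field_simp; try ring,
    div_div_eq_mul_div, one_div_div, ← neg_div,
    div_eq_div_iff (mul_ne_zero two_ne_zero (pow_ne_zero 4 hb)) (two_ne_zero)]
  field_simp
  ring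

/-- For every `m ∈ {1, …, l}`, the sum of the residues of
`Υ_{m,m,m}` at `μ = κ_m` and at `μ = κ_m⁻¹` exists and equals
`q_m = ∑_{n ≠ m} κ_n(1-κ_m²)/((κ_m-κ_n)(κ_m κ_n - 1))`, the residues being
expressed as circle integrals of sufficiently small radius. -/
theorem stmt5 (l : ℕ) (hl : 3 ≤ l) (κ : ℕ → ℂ)
    (hκ : ∀ r ∈ Finset.Icc 1 l, κ r ≠ 0 ∧ κ r ≠ 1 ∧ κ r ≠ -1)
    (hκ' : ∀ r ∈ Finset.Icc 1 l, ∀ s ∈ Finset.Icc 1 l, r ≠ s →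
      κ r ≠ κ s ∧ κ r * κ s ≠ 1)
    (m : ℕ) (hm : m ∈ Finset.Icc 1 l) :
    ∃ ε > (0 : ℝ), ∀ r : ℝ, 0 < r → r < ε →
      (2 * Real.pi * Complex.I)⁻¹ *
        ((∮ μ in C(κ m, r), Ups l κ m m m μ) +
          (∮ μ in C((κ m)⁻¹, r), Ups l κ m m m μ)) =
      ∑ n ∈ (Finset.Icc 1 l).erase m,
        κ n * (1 - κ m ^ 2) / ((κ m - κ n) * (κ m * κ n - 1)) := by
  obtain ⟨ha0, ha1, ham1⟩ := hκ m hm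
  have hml : m ≤ l := (Finset.mem_Icc.1 hm).2
  have hsq : (κ m) ^ 2 - 1 ≠ 0 := sq1 _ ha1 ham1
  have hb0 : (κ m)⁻¹ ≠ 0 := inv_ne_zero ha0
  have hb1 : (κ m)⁻¹ ≠ 1 := fun h => ha1 (by rwa [inv_eq_one] at h)
  have hbm1 : (κ m)⁻¹ ≠ -1 := fun h => ham1 (by rw [← inv_inv (κ m), h]; norm_num)
  have hbsq : ((κ m)⁻¹) ^ 2 - 1 ≠ 0 := sq1 _ hb1 hbm1
  have hab : κ m - (κ m)⁻¹ ≠ 0 := by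
    rw [sub_ne_zero]
    intro h
    apply hsq
    rw [sq]; nth_rewrite 2 [h]; rw [mul_inv_cancel₀ ha0, sub_self]
  have hba : (κ m)⁻¹ - κ m ≠ 0 := fun h => hab (by linear_combination -h)
  have hks : ∀ n ∈ (Finset.Icc 1 l).erase m, κ n ≠ 0 ∧ κ m - κ n ≠ 0 ∧
      κ m * κ n - 1 ≠ 0 ∧ κ m - (κ n)⁻¹ ≠ 0 ∧ (κ m)⁻¹ - κ n ≠ 0 ∧
      (κ m)⁻¹ - (κ n)⁻¹ ≠ 0 := by
    intro n hn
    have hnI : n ∈ Finset.Icc 1 l := Finset.mem_of_mem_erase hn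
    have hnm : n ≠ m := Finset.ne_of_mem_erase hn
    obtain ⟨hk0, -, -⟩ := hκ n hnI
    obtain ⟨hne, hprod⟩ := hκ' m hm n hnI (fun h => hnm h.symm)
    refine ⟨hk0, sub_ne_zero.2 hne, fun h => hprod (by linear_combination h), ?_, ?_, ?_⟩
    · rw [sub_ne_zero]; intro h; exact hprod (by rw [h, inv_mul_cancel₀ hk0])
    · rw [sub_ne_zero]; intro h; exact hprod (by rw [← h, mul_inv_cancel₀ ha0])
    · rw [sub_ne_zero]; intro h; exact (sub_ne_zero.2 hne) (by rw [inv_injective h, sub_self])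
  have hEc1 : DifferentiableAt ℂ (Eaux l κ m) (κ m) :=
    Eaux_diffAt l κ m (κ m) ha0 ha1 ham1
      (fun n hn => ⟨(hks n hn).2.1, (hks n hn).2.2.2.1⟩)
  have hEc2 : DifferentiableAt ℂ (Eaux l κ m) ((κ m)⁻¹) :=
    Eaux_diffAt l κ m ((κ m)⁻¹) hb0 hb1 hbm1
      (fun n hn => ⟨(hks n hn).2.2.2.2.1, (hks n hn).2.2.2.2.2⟩)
  -- eventual good behaviour near κ m
  have hG1c : ContinuousAt
      (fun μ : ℂ => 1 + (μ - κ m) * (1 / (μ - (κ m)⁻¹) + Eaux l κ m μ)) (κ m) :=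
    continuousAt_const.add ((continuousAt_id.sub continuousAt_const).mul
      ((continuousAt_const.div (continuousAt_id.sub continuousAt_const) hab).add
        hEc1.continuousAt))
  have hev1 : ∀ᶠ μ in 𝓝 (κ m), (μ ≠ 0 ∧ μ ≠ 1 ∧ μ ≠ -1 ∧ μ ≠ (κ m)⁻¹ ∧
      (∀ n ∈ (Finset.Icc 1 l).erase m, μ ≠ κ n ∧ μ ≠ (κ n)⁻¹) ∧
      1 + (μ - κ m) * (1 / (μ - (κ m)⁻¹) + Eaux l κ m μ) ≠ 0) :=
    (eventually_ne_nhds ha0).and ((eventually_ne_nhds ha1).and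
      ((eventually_ne_nhds ham1).and ((eventually_ne_nhds (sub_ne_zero.1 hab)).and
        (((Filter.eventually_all_finset _).2 fun n hn =>
            (eventually_ne_nhds (sub_ne_zero.1 (hks n hn).2.1)).and
              (eventually_ne_nhds (sub_ne_zero.1 (hks n hn).2.2.2.1))).and
          (hG1c.eventually_ne (by simp))))))
  have hG2c : ContinuousAt
      (fun μ : ℂ => 1 + (μ - (κ m)⁻¹) * (1 / (μ - κ m) + Eaux l κ m μ)) ((κ m)⁻¹) :=
    continuousAt_const.add ((continuousAt_id.sub continuousAt_const).mul
      ((continuousAt_const.div (continuousAt_id.sub continuousAt_const) hba).add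
        hEc2.continuousAt))
  have hev2 : ∀ᶠ μ in 𝓝 ((κ m)⁻¹), (μ ≠ 0 ∧ μ ≠ 1 ∧ μ ≠ -1 ∧ μ ≠ κ m ∧
      (∀ n ∈ (Finset.Icc 1 l).erase m, μ ≠ κ n ∧ μ ≠ (κ n)⁻¹) ∧
      1 + (μ - (κ m)⁻¹) * (1 / (μ - κ m) + Eaux l κ m μ) ≠ 0) :=
    (eventually_ne_nhds hb0).and ((eventually_ne_nhds hb1).and
      ((eventually_ne_nhds hbm1).and ((eventually_ne_nhds (sub_ne_zero.1 hba)).and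
        (((Filter.eventually_all_finset _).2 fun n hn =>
            (eventually_ne_nhds (sub_ne_zero.1 (hks n hn).2.2.2.2.1)).and
              (eventually_ne_nhds (sub_ne_zero.1 (hks n hn).2.2.2.2.2))).and
          (hG2c.eventually_ne (by simp))))))
  rw [Metric.eventually_nhds_iff_ball] at hev1 hev2
  obtain ⟨ε₁, hε₁, hP1⟩ := hev1
  obtain ⟨ε₂, hε₂, hP2⟩ := hev2
  refine ⟨min ε₁ ε₂, lt_min hε₁ hε₂, fun r hr hrε => ?_⟩
  have hrε₁ : r < ε₁ := lt_of_lt_of_le hrε (min_le_left _ _)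
  have hrε₂ : r < ε₂ := lt_of_lt_of_le hrε (min_le_right _ _)
  -- differentiability of the two regularized functions on closed discs
  have hd1 : DifferentiableOn ℂ
      (fun μ => -(-κ m + (κ m)⁻¹ * (μ - κ m) / (μ - (κ m)⁻¹)) ^ 3 /
        (2 * μ ^ 2 * (1 + (μ - κ m) * (1 / (μ - (κ m)⁻¹) + Eaux l κ m μ))))
      (Metric.closedBall (κ m) r) := by
    intro μ hμ
    have hμb : μ ∈ Metric.ball (κ m) ε₁ :=
      lt_of_le_of_lt (Metric.mem_closedBall.1 hμ) hrε₁
    obtain ⟨h0, h1, h2, hbne, hnn, hG⟩ := hP1 μ hμb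
    exact (diffAt_aux (-κ m) ((κ m)⁻¹) (κ m) ((κ m)⁻¹) (Eaux l κ m) μ
      (sub_ne_zero.2 hbne) h0
      (Eaux_diffAt l κ m μ h0 h1 h2
        (fun n hn => ⟨sub_ne_zero.2 (hnn n hn).1, sub_ne_zero.2 (hnn n hn).2⟩))
      hG).differentiableWithinAt
  have hd2 : DifferentiableOn ℂ
      (fun μ => -((κ m)⁻¹ + -κ m * (μ - (κ m)⁻¹) / (μ - κ m)) ^ 3 /
        (2 * μ ^ 2 * (1 + (μ - (κ m)⁻¹) * (1 / (μ - κ m) + Eaux l κ m μ))))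
      (Metric.closedBall ((κ m)⁻¹) r) := by
    intro μ hμ
    have hμb : μ ∈ Metric.ball ((κ m)⁻¹) ε₂ :=
      lt_of_le_of_lt (Metric.mem_closedBall.1 hμ) hrε₂
    obtain ⟨h0, h1, h2, hane, hnn, hG⟩ := hP2 μ hμb
    exact (diffAt_aux ((κ m)⁻¹) (-κ m) ((κ m)⁻¹) (κ m) (Eaux l κ m) μ
      (sub_ne_zero.2 hane) h0
      (Eaux_diffAt l κ m μ h0 h1 h2
        (fun n hn => ⟨sub_ne_zero.2 (hnn n hn).1, sub_ne_zero.2 (hnn n hn).2⟩))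
      hG).differentiableWithinAt
  -- the integrands agree on the two circles
  have heq1 : Set.EqOn (Ups l κ m m m)
      (fun z => (z - κ m)⁻¹ * ((z - κ m)⁻¹ *
        (-(-κ m + (κ m)⁻¹ * (z - κ m) / (z - (κ m)⁻¹)) ^ 3 /
          (2 * z ^ 2 * (1 + (z - κ m) * (1 / (z - (κ m)⁻¹) + Eaux l κ m z))))))
      (Metric.sphere (κ m) r) := by
    intro z hz
    have hzb : z ∈ Metric.ball (κ m) ε₁ := by
      rw [Metric.mem_sphere] at hz
      rw [Metric.mem_ball, hz]; exact hrε₁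
    obtain ⟨h0, h1, h2, hbne, hnn, hG⟩ := hP1 z hzb
    have hza : z - κ m ≠ 0 := by
      rw [sub_ne_zero]
      intro h
      rw [Metric.mem_sphere, h, dist_self] at hz
      exact (ne_of_gt hr) hz.symm
    have hDs : upsD l κ z = 1 / (z - κ m) + 1 / (z - (κ m)⁻¹) + Eaux l κ m z := by
      rw [upsD, Eaux, ← Finset.sum_erase_add _ _ hm]; ring
    show Ups l κ m m m z = _
    rw [Ups, upsFactor, if_pos hml, hDs]
    exact loc1 z (κ m) ((κ m)⁻¹) (Eaux l κ m z) hza (sub_ne_zero.2 hbne) h0 hG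
  have heq2 : Set.EqOn (Ups l κ m m m)
      (fun z => (z - (κ m)⁻¹)⁻¹ * ((z - (κ m)⁻¹)⁻¹ *
        (-((κ m)⁻¹ + -κ m * (z - (κ m)⁻¹) / (z - κ m)) ^ 3 /
          (2 * z ^ 2 * (1 + (z - (κ m)⁻¹) * (1 / (z - κ m) + Eaux l κ m z))))))
      (Metric.sphere ((κ m)⁻¹) r) := by
    intro z hz
    have hzb : z ∈ Metric.ball ((κ m)⁻¹) ε₂ := by
      rw [Metric.mem_sphere] at hz
      rw [Metric.mem_ball, hz]; exact hrε₂
    obtain ⟨h0, h1, h2, hane, hnn, hG⟩ := hP2 z hzb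
    have hzbne : z - (κ m)⁻¹ ≠ 0 := by
      rw [sub_ne_zero]
      intro h
      rw [Metric.mem_sphere, h, dist_self] at hz
      exact (ne_of_gt hr) hz.symm
    have hDs : upsD l κ z = 1 / (z - κ m) + 1 / (z - (κ m)⁻¹) + Eaux l κ m z := by
      rw [upsD, Eaux, ← Finset.sum_erase_add _ _ hm]; ring
    show Ups l κ m m m z = _
    rw [Ups, upsFactor, if_pos hml, hDs]
    exact loc2 z (κ m) ((κ m)⁻¹) (Eaux l κ m z) (sub_ne_zero.2 hane) hzbne h0 hG
  have h₁ : (∮ μ in C(κ m, r), Ups l κ m m m μ) =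
      ∮ z in C(κ m, r), (z - κ m)⁻¹ * ((z - κ m)⁻¹ *
        (-(-κ m + (κ m)⁻¹ * (z - κ m) / (z - (κ m)⁻¹)) ^ 3 /
          (2 * z ^ 2 * (1 + (z - κ m) * (1 / (z - (κ m)⁻¹) + Eaux l κ m z))))) :=
    circleIntegral.integral_congr hr.le heq1
  have h₂ : (∮ μ in C((κ m)⁻¹, r), Ups l κ m m m μ) =
      ∮ z in C((κ m)⁻¹, r), (z - (κ m)⁻¹)⁻¹ * ((z - (κ m)⁻¹)⁻¹ *
        (-((κ m)⁻¹ + -κ m * (z - (κ m)⁻¹) / (z - κ m)) ^ 3 /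
          (2 * z ^ 2 * (1 + (z - (κ m)⁻¹) * (1 / (z - κ m) + Eaux l κ m z))))) :=
    circleIntegral.integral_congr hr.le heq2
  have hres1 : (2 * (Real.pi : ℂ) * Complex.I)⁻¹ *
      (∮ z in C(κ m, r), (z - κ m)⁻¹ * ((z - κ m)⁻¹ *
        (-(-κ m + (κ m)⁻¹ * (z - κ m) / (z - (κ m)⁻¹)) ^ 3 /
          (2 * z ^ 2 * (1 + (z - κ m) * (1 / (z - (κ m)⁻¹) + Eaux l κ m z)))))) =
      deriv (fun μ : ℂ => -(-κ m + (κ m)⁻¹ * (μ - κ m) / (μ - (κ m)⁻¹)) ^ 3 /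
        (2 * μ ^ 2 * (1 + (μ - κ m) * (1 / (μ - (κ m)⁻¹) + Eaux l κ m μ)))) (κ m) :=
    residue2 _ (κ m) r hr hd1 r hr le_rfl
  have hres2 : (2 * (Real.pi : ℂ) * Complex.I)⁻¹ *
      (∮ z in C((κ m)⁻¹, r), (z - (κ m)⁻¹)⁻¹ * ((z - (κ m)⁻¹)⁻¹ *
        (-((κ m)⁻¹ + -κ m * (z - (κ m)⁻¹) / (z - κ m)) ^ 3 /
          (2 * z ^ 2 * (1 + (z - (κ m)⁻¹) * (1 / (z - κ m) + Eaux l κ m z)))))) =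
      deriv (fun μ : ℂ => -((κ m)⁻¹ + -κ m * (μ - (κ m)⁻¹) / (μ - κ m)) ^ 3 /
        (2 * μ ^ 2 * (1 + (μ - (κ m)⁻¹) * (1 / (μ - κ m) + Eaux l κ m μ)))) ((κ m)⁻¹) :=
    residue2 _ ((κ m)⁻¹) r hr hd2 r hr le_rfl
  have hdv1 : deriv (fun μ : ℂ => -(-κ m + (κ m)⁻¹ * (μ - κ m) / (μ - (κ m)⁻¹)) ^ 3 /
        (2 * μ ^ 2 * (1 + (μ - κ m) * (1 / (μ - (κ m)⁻¹) + Eaux l κ m μ)))) (κ m) =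
      -((3 * (-κ m) ^ 2 * ((κ m)⁻¹ / (κ m - (κ m)⁻¹)) * κ m ^ 2 -
          (-κ m) ^ 3 * (2 * κ m + κ m ^ 2 * (1 / (κ m - (κ m)⁻¹) + Eaux l κ m (κ m)))) /
        (2 * κ m ^ 4)) :=
    (hasDerivAt_aux (-κ m) ((κ m)⁻¹) (κ m) ((κ m)⁻¹) (deriv (Eaux l κ m) (κ m)) hab ha0
      (Eaux l κ m) hEc1.hasDerivAt).deriv
  have hdv2 : deriv (fun μ : ℂ => -((κ m)⁻¹ + -κ m * (μ - (κ m)⁻¹) / (μ - κ m)) ^ 3 /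
        (2 * μ ^ 2 * (1 + (μ - (κ m)⁻¹) * (1 / (μ - κ m) + Eaux l κ m μ)))) ((κ m)⁻¹) =
      -((3 * ((κ m)⁻¹) ^ 2 * (-κ m / ((κ m)⁻¹ - κ m)) * ((κ m)⁻¹) ^ 2 -
          ((κ m)⁻¹) ^ 3 * (2 * (κ m)⁻¹ +
            ((κ m)⁻¹) ^ 2 * (1 / ((κ m)⁻¹ - κ m) + Eaux l κ m ((κ m)⁻¹)))) /
        (2 * ((κ m)⁻¹) ^ 4)) :=
    (hasDerivAt_aux ((κ m)⁻¹) (-κ m) ((κ m)⁻¹) (κ m) (deriv (Eaux l κ m) ((κ m)⁻¹)) hba hb0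
      (Eaux l κ m) hEc2.hasDerivAt).deriv
  have hsum : ∑ n ∈ (Finset.Icc 1 l).erase m,
      κ n * (1 - κ m ^ 2) / ((κ m - κ n) * (κ m * κ n - 1)) =
      -(κ m / 2) * (∑ n ∈ (Finset.Icc 1 l).erase m,
          (1 / (κ m - κ n) + 1 / (κ m - (κ n)⁻¹))) +
        (κ m)⁻¹ / 2 * (∑ n ∈ (Finset.Icc 1 l).erase m,
          (1 / ((κ m)⁻¹ - κ n) + 1 / ((κ m)⁻¹ - (κ n)⁻¹))) := by
    rw [Finset.mul_sum, Finset.mul_sum, ← Finset.sum_add_distrib]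
    refine Finset.sum_congr rfl fun n hn => ?_
    obtain ⟨hk0, hd1, hd2, -, -, -⟩ := hks n hn
    exact perterm (κ m) (κ n) ha0 hk0 hd1 hd2
  have hE1 : Eaux l κ m (κ m) =
      (∑ n ∈ (Finset.Icc 1 l).erase m, (1 / (κ m - κ n) + 1 / (κ m - (κ n)⁻¹))) -
        ((l : ℂ) - 2) / κ m - 4 * κ m / (κ m ^ 2 - 1) := rfl
  have hE2 : Eaux l κ m ((κ m)⁻¹) =
      (∑ n ∈ (Finset.Icc 1 l).erase m,
        (1 / ((κ m)⁻¹ - κ n) + 1 / ((κ m)⁻¹ - (κ n)⁻¹))) -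
        ((l : ℂ) - 2) / (κ m)⁻¹ - 4 * (κ m)⁻¹ / (((κ m)⁻¹) ^ 2 - 1) := rfl
  rw [h₁, h₂, mul_add, hres1, hres2, hdv1, hdv2, hE1, hE2, hsum,
    finalg1 (κ m) _ ((l : ℂ)) ha0 hsq,
    finalg2 (κ m) ((κ m)⁻¹) _ ((l : ℂ)) hb0 (mul_inv_cancel₀ ha0) hbsq]
  ring
end

section
/- For all distinct m, k ∈ {1, …, l}, the sum of the residues of Υ_{m,m,k} at μ = κ_m and at μ = κ_m^{−1} exists and equals p_{mk} := κ_m(κ_k² − 1)/((κ_m − κ_k)(κ_m·κ_k − 1)). Precisely: there exists ε > 0 such that for every r with 0 < r < ε, (2πi)^{−1}·(∮_{|μ−κ_m|=r} Υ_{m,m,k}(μ) dμ + ∮_{|μ−κ_m^{−1}|=r} Υ_{m,m,k}(μ) dμ) = p_{mk}. -/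
open Complex Filter Topology

open Metric

noncomputable def auxh (l : ℕ) (κ : ℕ → ℂ) (m : ℕ) (b : ℂ) (μ : ℂ) : ℂ :=
  (∑ r ∈ (Finset.Icc 1 l).erase m, (1 / (μ - κ r) + 1 / (μ - (κ r)⁻¹)))
    + 1 / (μ - b) - ((l : ℂ) - 2) / μ - 4 * μ / (μ ^ 2 - 1)

noncomputable def auxE (l : ℕ) (κ : ℕ → ℂ) (m : ℕ) (a b : ℂ) (μ : ℂ) : ℂ :=
  1 + (μ - a) * auxh l κ m b μ

noncomputable def auxf (l : ℕ) (κ : ℕ → ℂ) (m k : ℕ) (a b : ℂ) (μ : ℂ) : ℂ :=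
  -((a - b) ^ 2 * upsFactor l κ k μ) / (2 * (μ - b) ^ 2 * auxE l κ m a b μ)

lemma diffAt_div_sub (d c x : ℂ) (h : x - c ≠ 0) :
    DifferentiableAt ℂ (fun μ : ℂ => d / (μ - c)) x :=
  DifferentiableAt.div (differentiableAt_const d)
    (differentiableAt_id.sub (differentiableAt_const c)) h

lemma residue_simple (a : ℂ) (g f : ℂ → ℂ) (U : Set ℂ) (hU : IsOpen U) (haU : a ∈ U)
    (hf : ∀ μ ∈ U, DifferentiableAt ℂ f μ)
    (heq : ∀ μ ∈ U, μ ≠ a → g μ = (μ - a)⁻¹ * f μ) :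
    ∃ ε > (0:ℝ), ∀ r : ℝ, 0 < r → r < ε →
      (∮ μ in C(a, r), g μ) = 2 * Real.pi * Complex.I * f a := by
  obtain ⟨ε, hε, hball⟩ := Metric.isOpen_iff.mp hU a haU
  refine ⟨ε, hε, fun r hr hrε => ?_⟩
  have hsub : closedBall a r ⊆ U := fun x hx =>
    hball (lt_of_le_of_lt (mem_closedBall.mp hx) hrε)
  have h1 : (∮ μ in C(a, r), g μ) = (∮ μ in C(a, r), (μ - a)⁻¹ • f μ) := by
    refine circleIntegral.integral_congr hr.le fun μ hμ => ?_
    have hd : dist μ a = r := mem_sphere.mp hμ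
    have hμa : μ ≠ a := by
      intro h; rw [h, dist_self] at hd; exact hr.ne hd
    have hμU : μ ∈ U := hsub (mem_closedBall.mpr hd.le)
    simpa [smul_eq_mul] using heq μ hμU hμa
  rw [h1]
  have hdiff : DifferentiableOn ℂ f (closedBall a r) :=
    fun x hx => (hf x (hsub hx)).differentiableWithinAt
  rw [hdiff.circleIntegral_sub_inv_smul (mem_ball_self hr)]
  simp [smul_eq_mul]

lemma resUps (l : ℕ) (κ : ℕ → ℂ) (m k : ℕ) (hml : m ∈ Finset.Icc 1 l)
    (hkl : k ∈ Finset.Icc 1 l) (a b : ℂ)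
    (hab : (κ m = a ∧ (κ m)⁻¹ = b) ∨ (κ m = b ∧ (κ m)⁻¹ = a))
    (ha0 : a ≠ 0) (ha1 : a ≠ 1) (ha1' : a ≠ -1) (haneb : a ≠ b)
    (hakk : a ≠ κ k) (hakk' : a ≠ (κ k)⁻¹)
    (hS : ∀ r ∈ (Finset.Icc 1 l).erase m, a ≠ κ r ∧ a ≠ (κ r)⁻¹) :
    ∃ ε > (0:ℝ), ∀ r : ℝ, 0 < r → r < ε →
      (∮ μ in C(a, r), Ups l κ m m k μ) =
        2 * Real.pi * Complex.I * (-(upsFactor l κ k a) / 2) := by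
  classical
  have hml' : m ≤ l := (Finset.mem_Icc.mp hml).2
  have hkl' : k ≤ l := (Finset.mem_Icc.mp hkl).2
  set s := (Finset.Icc 1 l).erase m with hs
  have hD : ∀ μ : ℂ, upsD l κ μ = 1 / (μ - a) + auxh l κ m b μ := by
    intro μ
    rw [upsD, auxh, ← Finset.add_sum_erase _ _ hml]
    rcases hab with ⟨e1, e2⟩ | ⟨e1, e2⟩ <;> rw [e2, e1] <;> ring
  set T : Finset ℂ := ({0, 1, -1, b, κ k, (κ k)⁻¹} : Finset ℂ)
      ∪ s.image κ ∪ s.image (fun r => (κ r)⁻¹) with hT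
  have hVopen : IsOpen ((↑T : Set ℂ)ᶜ) := T.finite_toSet.isClosed.isOpen_compl
  have hmemV : ∀ μ : ℂ, μ ∈ ((↑T : Set ℂ)ᶜ) →
      μ ≠ 0 ∧ μ ≠ 1 ∧ μ ≠ -1 ∧ μ ≠ b ∧ μ ≠ κ k ∧ μ ≠ (κ k)⁻¹ ∧
        ∀ r ∈ s, μ ≠ κ r ∧ μ ≠ (κ r)⁻¹ := by
    intro μ hμ
    have hμ' : μ ∉ T := hμ
    simp only [hT, Finset.mem_union, Finset.mem_insert, Finset.mem_singleton,
      Finset.mem_image] at hμ'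
    push_neg at hμ'
    obtain ⟨⟨⟨h0, h1, h2, h3, h4, h5⟩, h6⟩, h7⟩ := hμ'
    exact ⟨h0, h1, h2, h3, h4, h5, fun r hr =>
      ⟨fun h => h6 r hr h.symm, fun h => h7 r hr h.symm⟩⟩
  have hEdiff : ∀ μ ∈ ((↑T : Set ℂ)ᶜ), DifferentiableAt ℂ (auxE l κ m a b) μ := by
    intro μ hμ
    obtain ⟨h0, h1, h2, h3, h4, h5, h6⟩ := hmemV μ hμ
    have hsq : μ ^ 2 - 1 ≠ 0 := by
      intro h
      have h' : (μ - 1) * (μ + 1) = 0 := by rw [← h]; ring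
      rcases mul_eq_zero.mp h' with h' | h'
      · exact h1 (by linear_combination h')
      · exact h2 (by linear_combination h')
    have hh : DifferentiableAt ℂ (auxh l κ m b) μ := by
      unfold auxh
      refine DifferentiableAt.sub (DifferentiableAt.sub (DifferentiableAt.add ?_ ?_) ?_) ?_
      · refine DifferentiableAt.fun_sum fun r hr => DifferentiableAt.add ?_ ?_
        · exact diffAt_div_sub 1 (κ r) μ (sub_ne_zero.mpr (h6 r hr).1)
        · exact diffAt_div_sub 1 ((κ r)⁻¹) μ (sub_ne_zero.mpr (h6 r hr).2)
      · exact diffAt_div_sub 1 b μ (sub_ne_zero.mpr h3)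
      · exact (differentiableAt_const _).div differentiableAt_id h0
      · exact ((differentiableAt_const (4:ℂ)).mul differentiableAt_id).div
          ((differentiableAt_id.pow 2).sub (differentiableAt_const 1)) hsq
    exact (differentiableAt_const 1).add
      ((differentiableAt_id.sub (differentiableAt_const a)).mul hh)
  set U : Set ℂ := (↑T : Set ℂ)ᶜ ∩ (auxE l κ m a b) ⁻¹' {(0:ℂ)}ᶜ with hU
  have hUopen : IsOpen U :=
    ContinuousOn.isOpen_inter_preimage
      (fun μ hμ => (hEdiff μ hμ).continuousAt.continuousWithinAt) hVopen
      isOpen_compl_singleton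
  have hEa : auxE l κ m a b a = 1 := by simp [auxE]
  have haU : a ∈ U := by
    constructor
    · intro h
      have h' : a ∈ T := h
      simp only [hT, Finset.mem_union, Finset.mem_insert, Finset.mem_singleton,
        Finset.mem_image] at h'
      rcases h' with (h | h) | h
      · rcases h with h | h | h | h | h | h
        exacts [ha0 h, ha1 h, ha1' h, haneb h, hakk h, hakk' h]
      · obtain ⟨r, hr, hr'⟩ := h; exact (hS r hr).1 hr'.symm
      · obtain ⟨r, hr, hr'⟩ := h; exact (hS r hr).2 hr'.symm
    · simp only [Set.mem_preimage, Set.mem_compl_iff, Set.mem_singleton_iff, hEa]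
      exact one_ne_zero
  have hfdiff : ∀ μ ∈ U, DifferentiableAt ℂ (auxf l κ m k a b) μ := by
    intro μ hμ
    obtain ⟨hμV, hμE⟩ := hμ
    obtain ⟨h0, h1, h2, h3, h4, h5, h6⟩ := hmemV μ hμV
    have hμE' : auxE l κ m a b μ ≠ 0 := hμE
    have hFk : DifferentiableAt ℂ (upsFactor l κ k) μ := by
      have hrw : upsFactor l κ k = fun μ : ℂ =>
          -κ k / (μ - κ k) + (κ k)⁻¹ / (μ - (κ k)⁻¹) := by
        funext μ; simp [upsFactor, hkl']
      rw [hrw]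
      exact (diffAt_div_sub (-κ k) (κ k) μ (sub_ne_zero.mpr h4)).add
        (diffAt_div_sub ((κ k)⁻¹) ((κ k)⁻¹) μ (sub_ne_zero.mpr h5))
    have hden : 2 * (μ - b) ^ 2 * auxE l κ m a b μ ≠ 0 :=
      mul_ne_zero (mul_ne_zero two_ne_zero (pow_ne_zero 2 (sub_ne_zero.mpr h3))) hμE'
    unfold auxf
    exact DifferentiableAt.div
      (((differentiableAt_const _).mul hFk).neg)
      (((differentiableAt_const _).mul
        ((differentiableAt_id.sub (differentiableAt_const b)).pow 2)).mul (hEdiff μ hμV))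
      hden
  have heq : ∀ μ ∈ U, μ ≠ a → Ups l κ m m k μ = (μ - a)⁻¹ * auxf l κ m k a b μ := by
    intro μ hμ hμa
    obtain ⟨hμV, hμE⟩ := hμ
    obtain ⟨h0, h1, h2, h3, h4, h5, h6⟩ := hmemV μ hμV
    have hμa' : μ - a ≠ 0 := sub_ne_zero.mpr hμa
    have hμb' : μ - b ≠ 0 := sub_ne_zero.mpr h3
    have hFm : upsFactor l κ m μ * upsFactor l κ m μ =
        (-a / (μ - a) + b / (μ - b)) * (-a / (μ - a) + b / (μ - b)) := by
      rcases hab with ⟨e1, e2⟩ | ⟨e1, e2⟩ <;>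
        simp only [upsFactor, if_pos hml'] <;> rw [e2, e1] <;> ring
    rw [Ups, hD μ, auxf]
    set H := auxh l κ m b μ with hH
    have hEv : auxE l κ m a b μ = 1 + (μ - a) * H := rfl
    set Ev := auxE l κ m a b μ with hEvdef
    have hμE' : Ev ≠ 0 := hμE
    have hDform : 1 / (μ - a) + H = Ev / (μ - a) := by
      rw [hEv]; field_simp
    rw [hDform, hFm]
    field_simp [hμa', hμb', h0, hμE']
    ring
  obtain ⟨ε, hε, hres⟩ :=
    residue_simple a (Ups l κ m m k) (auxf l κ m k a b) U hUopen haU hfdiff heq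
  refine ⟨ε, hε, fun r hr hrε => ?_⟩
  rw [hres r hr hrε]
  congr 1
  rw [auxf, hEa]
  have hab' : a - b ≠ 0 := sub_ne_zero.mpr haneb
  field_simp

/-- For all distinct `m, k ∈ {1, …, l}`, the sum of the
residues of `Υ_{m,m,k}` at `μ = κ_m` and at `μ = κ_m⁻¹` exists and equals
`p_{mk} = κ_m(κ_k² - 1)/((κ_m - κ_k)(κ_m κ_k - 1))`, the residues being
expressed as circle integrals of sufficiently small radius. -/
theorem stmt6 (l : ℕ) (hl : 3 ≤ l) (κ : ℕ → ℂ)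
    (hκ : ∀ r ∈ Finset.Icc 1 l, κ r ≠ 0 ∧ κ r ≠ 1 ∧ κ r ≠ -1)
    (hκ' : ∀ r ∈ Finset.Icc 1 l, ∀ s ∈ Finset.Icc 1 l, r ≠ s →
      κ r ≠ κ s ∧ κ r * κ s ≠ 1)
    (m k : ℕ) (hm : m ∈ Finset.Icc 1 l) (hk : k ∈ Finset.Icc 1 l) (hmk : m ≠ k) :
    ∃ ε > (0 : ℝ), ∀ r : ℝ, 0 < r → r < ε →
      (2 * Real.pi * Complex.I)⁻¹ *
        ((∮ μ in C(κ m, r), Ups l κ m m k μ) +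
          (∮ μ in C((κ m)⁻¹, r), Ups l κ m m k μ)) =
      κ m * (κ k ^ 2 - 1) / ((κ m - κ k) * (κ m * κ k - 1)) := by
  obtain ⟨hm0, hm1, hm1'⟩ := hκ m hm
  obtain ⟨hk0, hk1, hk1'⟩ := hκ k hk
  have hkl' : k ≤ l := (Finset.mem_Icc.mp hk).2
  have hmkne : κ m ≠ κ k := (hκ' m hm k hk hmk).1
  have hmk1 : κ m * κ k ≠ 1 := (hκ' m hm k hk hmk).2
  have hselfinv : κ m ≠ (κ m)⁻¹ := by
    intro h
    have h2 : κ m * κ m = 1 := by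
      nth_rewrite 2 [h]
      exact mul_inv_cancel₀ hm0
    have h3 : (κ m - 1) * (κ m + 1) = 0 := by linear_combination h2
    rcases mul_eq_zero.mp h3 with h' | h'
    · exact hm1 (by linear_combination h')
    · exact hm1' (by linear_combination h')
  have hmkk' : κ m ≠ (κ k)⁻¹ := by
    intro h; exact hmk1 (by rw [h, inv_mul_cancel₀ hk0])
  have hinv0 : (κ m)⁻¹ ≠ 0 := inv_ne_zero hm0
  have hinv1 : (κ m)⁻¹ ≠ 1 := by
    intro h; exact hm1 (by rw [← inv_inv (κ m), h, inv_one])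
  have hinv1' : (κ m)⁻¹ ≠ -1 := by
    intro h
    apply hm1'
    rw [← inv_inv (κ m), h]
    norm_num
  have hinvk : (κ m)⁻¹ ≠ κ k := by
    intro h; exact hmk1 (by rw [← h, mul_inv_cancel₀ hm0])
  have hinvk' : (κ m)⁻¹ ≠ (κ k)⁻¹ := fun h => hmkne (inv_injective h)
  have hS1 : ∀ r ∈ (Finset.Icc 1 l).erase m, κ m ≠ κ r ∧ κ m ≠ (κ r)⁻¹ := by
    intro r hr
    obtain ⟨hrm, hrI⟩ := Finset.mem_erase.mp hr
    have hr0 := (hκ r hrI).1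
    refine ⟨(hκ' m hm r hrI (Ne.symm hrm)).1, fun h => ?_⟩
    exact (hκ' m hm r hrI (Ne.symm hrm)).2 (by rw [h, inv_mul_cancel₀ hr0])
  have hS2 : ∀ r ∈ (Finset.Icc 1 l).erase m, (κ m)⁻¹ ≠ κ r ∧ (κ m)⁻¹ ≠ (κ r)⁻¹ := by
    intro r hr
    obtain ⟨hrm, hrI⟩ := Finset.mem_erase.mp hr
    constructor
    · intro h
      exact (hκ' r hrI m hm hrm).2 (by rw [← h, inv_mul_cancel₀ hm0])
    · exact fun h => (hκ' m hm r hrI (Ne.symm hrm)).1 (inv_injective h)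
  obtain ⟨ε₁, hε₁, H1⟩ := resUps l κ m k hm hk (κ m) ((κ m)⁻¹)
    (Or.inl ⟨rfl, rfl⟩) hm0 hm1 hm1' hselfinv hmkne hmkk' hS1
  obtain ⟨ε₂, hε₂, H2⟩ := resUps l κ m k hm hk ((κ m)⁻¹) (κ m)
    (Or.inr ⟨rfl, rfl⟩) hinv0 hinv1 hinv1' (Ne.symm hselfinv) hinvk hinvk' hS2
  refine ⟨min ε₁ ε₂, lt_min hε₁ hε₂, fun r hr hrε => ?_⟩
  rw [H1 r hr (lt_of_lt_of_le hrε (min_le_left _ _)),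
    H2 r hr (lt_of_lt_of_le hrε (min_le_right _ _))]
  have h2pi : (2 * (Real.pi : ℂ) * Complex.I) ≠ 0 := by
    simp [Real.pi_ne_zero, Complex.I_ne_zero, Complex.ofReal_ne_zero]
  rw [← mul_add, inv_mul_cancel_left₀ h2pi]
  simp only [upsFactor, if_pos hkl']
  have d1 : κ m - κ k ≠ 0 := sub_ne_zero.mpr hmkne
  have d2 : κ m - (κ k)⁻¹ ≠ 0 := sub_ne_zero.mpr hmkk'
  have d3 : (κ m)⁻¹ - κ k ≠ 0 := sub_ne_zero.mpr hinvk
  have d4 : (κ m)⁻¹ - (κ k)⁻¹ ≠ 0 := sub_ne_zero.mpr hinvk'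
  have d5 : κ m * κ k - 1 ≠ 0 := sub_ne_zero.mpr hmk1
  have d1' : κ k - κ m ≠ 0 := sub_ne_zero.mpr (Ne.symm hmkne)
  have d5' : (1 : ℂ) - κ k * κ m ≠ 0 := by
    intro h; exact d5 (by linear_combination -h)
  have e2 : κ m - (κ k)⁻¹ = (κ m * κ k - 1) / κ k := by field_simp
  have e3 : (κ m)⁻¹ - κ k = -((κ m * κ k - 1) / κ m) := by field_simp; ring
  have e4 : (κ m)⁻¹ - (κ k)⁻¹ = -((κ m - κ k) / (κ m * κ k)) := by field_simp; ring
  have v1 : (κ k)⁻¹ / (κ m - (κ k)⁻¹) = 1 / (κ m * κ k - 1) := by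
    rw [e2]; rw [div_div_eq_mul_div]; field_simp
  have v2 : -κ k / ((κ m)⁻¹ - κ k) = κ m * κ k / (κ m * κ k - 1) := by
    rw [e3, div_neg, neg_div, neg_neg, div_div_eq_mul_div, mul_comm (κ k) (κ m)]
  have v3 : (κ k)⁻¹ / ((κ m)⁻¹ - (κ k)⁻¹) = κ m / (κ k - κ m) := by
    rw [e4]; field_simp [hm0, hk0, d1, d1']; ring
  rw [v1, v2, v3]
  have d6 : κ k * κ m - 1 ≠ 0 := by
    rw [mul_comm]; exact d5
  field_simp [d1, d1', d5, d5', d6]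
  ring
end

section
/- For every m ∈ {1, …, l}, the sum of the residues of Υ_{m,m,l+1} at μ = κ_m and at μ = κ_m^{−1} exists and equals −1. Precisely: there exists ε > 0 such that for every r with 0 < r < ε, (2πi)^{−1}·(∮_{|μ−κ_m|=r} Υ_{m,m,l+1}(μ) dμ + ∮_{|μ−κ_m^{−1}|=r} Υ_{m,m,l+1}(μ) dμ) = −1. -/
open Complex Filter Topology

/-! ### Auxiliary definitions: regular parts of `D` at the two poles -/

/-- The regular part of `D` at `μ = κ m`. -/
noncomputable def regA (l : ℕ) (κ : ℕ → ℂ) (m : ℕ) (μ : ℂ) : ℂ :=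
  (∑ r ∈ (Finset.Icc 1 l).erase m, (1 / (μ - κ r) + 1 / (μ - (κ r)⁻¹)))
    + 1 / (μ - (κ m)⁻¹) - ((l : ℂ) - 2) / μ - 4 * μ / (μ ^ 2 - 1)

/-- The regular part of `D` at `μ = (κ m)⁻¹`. -/
noncomputable def regB (l : ℕ) (κ : ℕ → ℂ) (m : ℕ) (μ : ℂ) : ℂ :=
  (∑ r ∈ (Finset.Icc 1 l).erase m, (1 / (μ - κ r) + 1 / (μ - (κ r)⁻¹)))
    + 1 / (μ - κ m) - ((l : ℂ) - 2) / μ - 4 * μ / (μ ^ 2 - 1)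

/-- Holomorphic function whose value at `κ m` is the residue `·(-1/2)` at `κ m`. -/
noncomputable def GA (l : ℕ) (κ : ℕ → ℂ) (m : ℕ) (μ : ℂ) : ℂ :=
  -(-κ m + (κ m)⁻¹ * (μ - κ m) / (μ - (κ m)⁻¹)) ^ 2
    / (2 * μ ^ 2 * (1 + (μ - κ m) * regA l κ m μ))

/-- Holomorphic function whose value at `(κ m)⁻¹` is the residue at `(κ m)⁻¹`. -/
noncomputable def GB (l : ℕ) (κ : ℕ → ℂ) (m : ℕ) (μ : ℂ) : ℂ :=
  -((κ m)⁻¹ + -κ m * (μ - (κ m)⁻¹) / (μ - κ m)) ^ 2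
    / (2 * μ ^ 2 * (1 + (μ - (κ m)⁻¹) * regB l κ m μ))

lemma upsD_eq_A (l : ℕ) (κ : ℕ → ℂ) {m : ℕ} (hm : m ∈ Finset.Icc 1 l) (μ : ℂ) :
    upsD l κ μ = 1 / (μ - κ m) + regA l κ m μ := by
  unfold upsD regA
  rw [← Finset.add_sum_erase _ _ hm]
  ring

lemma upsD_eq_B (l : ℕ) (κ : ℕ → ℂ) {m : ℕ} (hm : m ∈ Finset.Icc 1 l) (μ : ℂ) :
    upsD l κ μ = 1 / (μ - (κ m)⁻¹) + regB l κ m μ := by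
  unfold upsD regB
  rw [← Finset.add_sum_erase _ _ hm]
  ring

/-! ### The key algebraic identity -/

lemma key_alg (μ s u p q t : ℂ) (hs : s ≠ 0) (hu : u ≠ 0) (hμ : μ ≠ 0) :
    -((p / s + q / u) * (p / s + q / u) * 1) / (2 * μ ^ 2 * (t / s))
      = s⁻¹ * (-(p + q * s / u) ^ 2 / (2 * μ ^ 2 * t)) := by
  have e1 : p / s + q / u = (p + q * s / u) / s := by
    field_simp
  rw [e1]
  have e2 : -((p + q * s / u) / s * ((p + q * s / u) / s) * 1)
      = -(p + q * s / u) ^ 2 / s ^ 2 := by ring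
  have e3 : 2 * μ ^ 2 * (t / s) = 2 * μ ^ 2 * t / s := by ring
  rw [e2, e3]
  set A := -(p + q * s / u) ^ 2 with hA
  rcases eq_or_ne t 0 with h | h
  · simp [h]
  · have h2 : 2 * μ ^ 2 * t ≠ 0 := by
      simp [h, hμ, pow_ne_zero]
    set B := 2 * μ ^ 2 * t with hB
    rw [div_div_eq_mul_div, div_mul_eq_mul_div, div_div, sq, mul_assoc,
      mul_comm A s, mul_div_mul_left _ _ hs, eq_comm, inv_mul_eq_div, div_div,
      mul_comm B s]

lemma myDivHelper (s t : ℂ) (hs : s ≠ 0) : 1 / s + t = (1 + s * t) / s := by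
  rw [add_div, mul_comm, mul_div_assoc, div_self hs, mul_one]

/-! ### Cauchy integral formula specialization -/

lemma cauchy_aux (c : ℂ) (G f : ℂ → ℂ) (ε : ℝ) (r : ℝ) (hr : 0 < r) (hrε : r < ε)
    (hG : DifferentiableOn ℂ G (Metric.closedBall c ε))
    (heq : ∀ μ ∈ Metric.sphere c r, f μ = (μ - c)⁻¹ * G μ) :
    (∮ μ in C(c, r), f μ) = (2 * Real.pi * I) * G c := by
  have h1 : (∮ μ in C(c, r), f μ) = ∮ μ in C(c, r), (μ - c)⁻¹ • G μ := by
    refine circleIntegral.integral_congr hr.le fun μ hμ => ?_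
    simpa [smul_eq_mul] using heq μ hμ
  rw [h1]
  have := (hG.mono (Metric.closedBall_subset_closedBall hrε.le)).circleIntegral_sub_inv_smul
    (Metric.mem_ball_self hr)
  simpa [smul_eq_mul] using this

/-! ### Differentiability helpers -/

lemma dAt_one_div_sub {c μ : ℂ} (h : μ ≠ c) :
    DifferentiableAt ℂ (fun z : ℂ => 1 / (z - c)) μ :=
  (differentiableAt_const _).div (differentiableAt_id.sub (differentiableAt_const _))
    (sub_ne_zero.2 h)

lemma sq_sub_one_ne_zero {μ : ℂ} (h1 : μ ≠ 1) (hm1 : μ ≠ -1) : μ ^ 2 - 1 ≠ 0 := by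
  have : μ ^ 2 - 1 = (μ - 1) * (μ + 1) := by ring
  rw [this]
  exact mul_ne_zero (sub_ne_zero.2 h1)
    (fun h => hm1 (by linear_combination h))

set_option maxHeartbeats 1000000 in
lemma regA_diff (l : ℕ) (κ : ℕ → ℂ) (m : ℕ) {μ : ℂ}
    (hinv : μ ≠ (κ m)⁻¹) (h0 : μ ≠ 0) (h1 : μ ≠ 1) (hm1 : μ ≠ -1)
    (hr : ∀ r ∈ (Finset.Icc 1 l).erase m, μ ≠ κ r ∧ μ ≠ (κ r)⁻¹) :
    DifferentiableAt ℂ (regA l κ m) μ := by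
  unfold regA
  refine ((((DifferentiableAt.fun_sum fun r hrs =>
      (dAt_one_div_sub (hr r hrs).1).add (dAt_one_div_sub (hr r hrs).2)).add
      (dAt_one_div_sub hinv)).sub
      ((differentiableAt_const _).div differentiableAt_id h0)).sub
      (((differentiableAt_const _).mul differentiableAt_id).div
        ((differentiableAt_pow 2).sub (differentiableAt_const _))
        (sq_sub_one_ne_zero h1 hm1)))

set_option maxHeartbeats 1000000 in
lemma regB_diff (l : ℕ) (κ : ℕ → ℂ) (m : ℕ) {μ : ℂ}
    (hka : μ ≠ κ m) (h0 : μ ≠ 0) (h1 : μ ≠ 1) (hm1 : μ ≠ -1)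
    (hr : ∀ r ∈ (Finset.Icc 1 l).erase m, μ ≠ κ r ∧ μ ≠ (κ r)⁻¹) :
    DifferentiableAt ℂ (regB l κ m) μ := by
  unfold regB
  refine ((((DifferentiableAt.fun_sum fun r hrs =>
      (dAt_one_div_sub (hr r hrs).1).add (dAt_one_div_sub (hr r hrs).2)).add
      (dAt_one_div_sub hka)).sub
      ((differentiableAt_const _).div differentiableAt_id h0)).sub
      (((differentiableAt_const _).mul differentiableAt_id).div
        ((differentiableAt_pow 2).sub (differentiableAt_const _))
        (sq_sub_one_ne_zero h1 hm1)))

set_option maxHeartbeats 1000000 in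
lemma GA_diff (l : ℕ) (κ : ℕ → ℂ) (m : ℕ) {μ : ℂ}
    (hinv : μ ≠ (κ m)⁻¹) (h0 : μ ≠ 0) (h1 : μ ≠ 1) (hm1 : μ ≠ -1)
    (hr : ∀ r ∈ (Finset.Icc 1 l).erase m, μ ≠ κ r ∧ μ ≠ (κ r)⁻¹)
    (ht : 1 + (μ - κ m) * regA l κ m μ ≠ 0) :
    DifferentiableAt ℂ (GA l κ m) μ := by
  have hnum : DifferentiableAt ℂ
      (fun μ : ℂ => -(-κ m + (κ m)⁻¹ * (μ - κ m) / (μ - (κ m)⁻¹)) ^ 2) μ := by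
    have d1 : DifferentiableAt ℂ (fun μ : ℂ => (κ m)⁻¹ * (μ - κ m)) μ :=
      (differentiableAt_const _).mul (differentiableAt_id.sub (differentiableAt_const _))
    have d2 : DifferentiableAt ℂ (fun μ : ℂ => μ - (κ m)⁻¹) μ :=
      differentiableAt_id.sub (differentiableAt_const _)
    exact (((differentiableAt_const _).add (d1.div d2 (sub_ne_zero.2 hinv))).pow 2).neg
  have hreg : DifferentiableAt ℂ (regA l κ m) μ := regA_diff l κ m hinv h0 h1 hm1 hr
  have hden : DifferentiableAt ℂ
      (fun μ : ℂ => 2 * μ ^ 2 * (1 + (μ - κ m) * regA l κ m μ)) μ := by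
    have d3 : DifferentiableAt ℂ (fun μ : ℂ => 2 * μ ^ 2) μ :=
      (differentiableAt_const _).mul (differentiableAt_pow 2)
    have d4 : DifferentiableAt ℂ (fun μ : ℂ => 1 + (μ - κ m) * regA l κ m μ) μ :=
      (differentiableAt_const _).add
        ((differentiableAt_id.sub (differentiableAt_const _)).mul hreg)
    exact d3.mul d4
  exact hnum.div hden (mul_ne_zero (mul_ne_zero two_ne_zero (pow_ne_zero 2 h0)) ht)

set_option maxHeartbeats 1000000 in
lemma GB_diff (l : ℕ) (κ : ℕ → ℂ) (m : ℕ) {μ : ℂ}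
    (hka : μ ≠ κ m) (h0 : μ ≠ 0) (h1 : μ ≠ 1) (hm1 : μ ≠ -1)
    (hr : ∀ r ∈ (Finset.Icc 1 l).erase m, μ ≠ κ r ∧ μ ≠ (κ r)⁻¹)
    (ht : 1 + (μ - (κ m)⁻¹) * regB l κ m μ ≠ 0) :
    DifferentiableAt ℂ (GB l κ m) μ := by
  have hnum : DifferentiableAt ℂ
      (fun μ : ℂ => -((κ m)⁻¹ + -κ m * (μ - (κ m)⁻¹) / (μ - κ m)) ^ 2) μ := by
    have d1 : DifferentiableAt ℂ (fun μ : ℂ => -κ m * (μ - (κ m)⁻¹)) μ :=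
      (differentiableAt_const _).mul (differentiableAt_id.sub (differentiableAt_const _))
    have d2 : DifferentiableAt ℂ (fun μ : ℂ => μ - κ m) μ :=
      differentiableAt_id.sub (differentiableAt_const _)
    exact (((differentiableAt_const _).add (d1.div d2 (sub_ne_zero.2 hka))).pow 2).neg
  have hreg : DifferentiableAt ℂ (regB l κ m) μ := regB_diff l κ m hka h0 h1 hm1 hr
  have hden : DifferentiableAt ℂ
      (fun μ : ℂ => 2 * μ ^ 2 * (1 + (μ - (κ m)⁻¹) * regB l κ m μ)) μ := by
    have d3 : DifferentiableAt ℂ (fun μ : ℂ => 2 * μ ^ 2) μ :=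
      (differentiableAt_const _).mul (differentiableAt_pow 2)
    have d4 : DifferentiableAt ℂ (fun μ : ℂ => 1 + (μ - (κ m)⁻¹) * regB l κ m μ) μ :=
      (differentiableAt_const _).add
        ((differentiableAt_id.sub (differentiableAt_const _)).mul hreg)
    exact d3.mul d4
  exact hnum.div hden (mul_ne_zero (mul_ne_zero two_ne_zero (pow_ne_zero 2 h0)) ht)

/-! ### Values at the poles -/

lemma GA_val (l : ℕ) (κ : ℕ → ℂ) (m : ℕ) (h0 : κ m ≠ 0) :
    GA l κ m (κ m) = -(1 / 2) := by
  unfold GA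
  rw [sub_self]
  field_simp
  ring

lemma GB_val (l : ℕ) (κ : ℕ → ℂ) (m : ℕ) (h0 : κ m ≠ 0) :
    GB l κ m ((κ m)⁻¹) = -(1 / 2) := by
  unfold GB
  rw [sub_self]
  field_simp
  simp

/-! ### Equality of `Ups` with the Cauchy kernels near the poles -/

lemma ups_eq_A (l : ℕ) (κ : ℕ → ℂ) {m : ℕ} (hm : m ∈ Finset.Icc 1 l) {μ : ℂ}
    (hs : μ ≠ κ m) (hu : μ ≠ (κ m)⁻¹) (h0 : μ ≠ 0) :
    Ups l κ m m (l + 1) μ = (μ - κ m)⁻¹ * GA l κ m μ := by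
  have hml : m ≤ l := (Finset.mem_Icc.mp hm).2
  have hDA : upsD l κ μ = (1 + (μ - κ m) * regA l κ m μ) / (μ - κ m) := by
    rw [upsD_eq_A l κ hm μ, myDivHelper _ _ (sub_ne_zero.2 hs)]
  unfold Ups upsFactor GA
  rw [if_pos hml, if_neg (by omega : ¬ l + 1 ≤ l), hDA]
  exact key_alg μ (μ - κ m) (μ - (κ m)⁻¹) (-κ m) ((κ m)⁻¹)
    (1 + (μ - κ m) * regA l κ m μ) (sub_ne_zero.2 hs) (sub_ne_zero.2 hu) h0

lemma ups_eq_B (l : ℕ) (κ : ℕ → ℂ) {m : ℕ} (hm : m ∈ Finset.Icc 1 l) {μ : ℂ}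
    (hs : μ ≠ (κ m)⁻¹) (hu : μ ≠ κ m) (h0 : μ ≠ 0) :
    Ups l κ m m (l + 1) μ = (μ - (κ m)⁻¹)⁻¹ * GB l κ m μ := by
  have hml : m ≤ l := (Finset.mem_Icc.mp hm).2
  have hDB : upsD l κ μ = (1 + (μ - (κ m)⁻¹) * regB l κ m μ) / (μ - (κ m)⁻¹) := by
    rw [upsD_eq_B l κ hm μ, myDivHelper _ _ (sub_ne_zero.2 hs)]
  unfold Ups upsFactor GB
  rw [if_pos hml, if_neg (by omega : ¬ l + 1 ≤ l), hDB,
    add_comm (-κ m / (μ - κ m)) ((κ m)⁻¹ / (μ - (κ m)⁻¹))]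
  exact key_alg μ (μ - (κ m)⁻¹) (μ - κ m) ((κ m)⁻¹) (-κ m)
    (1 + (μ - (κ m)⁻¹) * regB l κ m μ) (sub_ne_zero.2 hs) (sub_ne_zero.2 hu) h0

/-- For every `m ∈ {1, …, l}`, the sum of the residues of
`Υ_{m,m,l+1}` at `μ = κ_m` and at `μ = κ_m⁻¹` exists and equals `-1`, the
residues being expressed as circle integrals of sufficiently small radius. -/
theorem stmt7 (l : ℕ) (hl : 3 ≤ l) (κ : ℕ → ℂ)
    (hκ : ∀ r ∈ Finset.Icc 1 l, κ r ≠ 0 ∧ κ r ≠ 1 ∧ κ r ≠ -1)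
    (hκ' : ∀ r ∈ Finset.Icc 1 l, ∀ s ∈ Finset.Icc 1 l, r ≠ s →
      κ r ≠ κ s ∧ κ r * κ s ≠ 1)
    (m : ℕ) (hm : m ∈ Finset.Icc 1 l) :
    ∃ ε > (0 : ℝ), ∀ r : ℝ, 0 < r → r < ε →
      (2 * Real.pi * Complex.I)⁻¹ *
        ((∮ μ in C(κ m, r), Ups l κ m m (l + 1) μ) +
          (∮ μ in C((κ m)⁻¹, r), Ups l κ m m (l + 1) μ)) = -1 := by
  obtain ⟨ha0, ha1, ham1⟩ := hκ m hm
  have hinv0 : (κ m)⁻¹ ≠ 0 := inv_ne_zero ha0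
  have hinv1 : (κ m)⁻¹ ≠ 1 := fun h => ha1 (by rwa [inv_eq_one] at h)
  have hinvm1 : (κ m)⁻¹ ≠ -1 := by
    intro h
    apply ham1
    have := inv_eq_iff_eq_inv.mp h
    rwa [inv_neg, inv_one] at this
  have haa : κ m ≠ (κ m)⁻¹ := by
    intro h
    have h2 : κ m * κ m = 1 := by
      nth_rewrite 2 [h]
      exact mul_inv_cancel₀ ha0
    rcases mul_self_eq_one_iff.mp h2 with h3 | h3
    · exact ha1 h3
    · exact ham1 h3
  -- facts about other poles
  have hother : ∀ r ∈ (Finset.Icc 1 l).erase m,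
      (κ m ≠ κ r ∧ κ m ≠ (κ r)⁻¹) ∧ ((κ m)⁻¹ ≠ κ r ∧ (κ m)⁻¹ ≠ (κ r)⁻¹) := by
    intro r hrr
    have hrm : r ≠ m := Finset.ne_of_mem_erase hrr
    have hrI : r ∈ Finset.Icc 1 l := Finset.mem_of_mem_erase hrr
    obtain ⟨hr0, _, _⟩ := hκ r hrI
    obtain ⟨hne, hprod⟩ := hκ' r hrI m hm hrm
    refine ⟨⟨fun h => hne h.symm, fun h => hprod ?_⟩, ⟨fun h => hprod ?_, fun h => hne ?_⟩⟩
    · rw [h, mul_inv_cancel₀ hr0]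
    · rw [← h, inv_mul_cancel₀ ha0]
    · exact inv_injective h.symm
  -- eventual goodness near κ m
  have hevA : ∀ᶠ μ in 𝓝 (κ m),
      (μ ≠ (κ m)⁻¹ ∧ μ ≠ 0 ∧ μ ≠ 1 ∧ μ ≠ -1 ∧
        (∀ r ∈ (Finset.Icc 1 l).erase m, μ ≠ κ r ∧ μ ≠ (κ r)⁻¹)) ∧
      1 + (μ - κ m) * regA l κ m μ ≠ 0 := by
    have hrs : ∀ᶠ μ in 𝓝 (κ m),
        ∀ r ∈ (Finset.Icc 1 l).erase m, μ ≠ κ r ∧ μ ≠ (κ r)⁻¹ := by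
      rw [eventually_all_finset]
      intro r hrr
      exact (eventually_ne_nhds (hother r hrr).1.1).and
        (eventually_ne_nhds (hother r hrr).1.2)
    have hbase : ∀ r ∈ (Finset.Icc 1 l).erase m, κ m ≠ κ r ∧ κ m ≠ (κ r)⁻¹ :=
      fun r hrr => (hother r hrr).1
    have hreg : ContinuousAt (fun μ => 1 + (μ - κ m) * regA l κ m μ) (κ m) := by
      exact ((continuousAt_const.add ((continuousAt_id.sub continuousAt_const).mul
        (regA_diff l κ m haa ha0 ha1 ham1 hbase).continuousAt)))
    have hne1 : (1 : ℂ) + (κ m - κ m) * regA l κ m (κ m) ≠ 0 := by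
      simp
    exact ((((eventually_ne_nhds haa).and (eventually_ne_nhds ha0)).and
      (((eventually_ne_nhds ha1).and (eventually_ne_nhds ham1)).and hrs)).and
      (hreg.eventually_ne hne1)).mono (fun μ h => ⟨⟨h.1.1.1, h.1.1.2, h.1.2.1.1, h.1.2.1.2, h.1.2.2⟩, h.2⟩)
  have hevB : ∀ᶠ μ in 𝓝 ((κ m)⁻¹),
      (μ ≠ κ m ∧ μ ≠ 0 ∧ μ ≠ 1 ∧ μ ≠ -1 ∧
        (∀ r ∈ (Finset.Icc 1 l).erase m, μ ≠ κ r ∧ μ ≠ (κ r)⁻¹)) ∧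
      1 + (μ - (κ m)⁻¹) * regB l κ m μ ≠ 0 := by
    have hrs : ∀ᶠ μ in 𝓝 ((κ m)⁻¹),
        ∀ r ∈ (Finset.Icc 1 l).erase m, μ ≠ κ r ∧ μ ≠ (κ r)⁻¹ := by
      rw [eventually_all_finset]
      intro r hrr
      exact (eventually_ne_nhds (hother r hrr).2.1).and
        (eventually_ne_nhds (hother r hrr).2.2)
    have hbase : ∀ r ∈ (Finset.Icc 1 l).erase m, (κ m)⁻¹ ≠ κ r ∧ (κ m)⁻¹ ≠ (κ r)⁻¹ :=
      fun r hrr => (hother r hrr).2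
    have hreg : ContinuousAt (fun μ => 1 + (μ - (κ m)⁻¹) * regB l κ m μ) ((κ m)⁻¹) := by
      exact ((continuousAt_const.add ((continuousAt_id.sub continuousAt_const).mul
        (regB_diff l κ m (Ne.symm haa) hinv0 hinv1 hinvm1 hbase).continuousAt)))
    have hne1 : (1 : ℂ) + ((κ m)⁻¹ - (κ m)⁻¹) * regB l κ m ((κ m)⁻¹) ≠ 0 := by
      simp
    exact ((((eventually_ne_nhds (Ne.symm haa)).and (eventually_ne_nhds hinv0)).and
      (((eventually_ne_nhds hinv1).and (eventually_ne_nhds hinvm1)).and hrs)).and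
      (hreg.eventually_ne hne1)).mono (fun μ h => ⟨⟨h.1.1.1, h.1.1.2, h.1.2.1.1, h.1.2.1.2, h.1.2.2⟩, h.2⟩)
  obtain ⟨εA, hεA, hballA⟩ := Metric.eventually_nhds_iff_ball.mp hevA
  obtain ⟨εB, hεB, hballB⟩ := Metric.eventually_nhds_iff_ball.mp hevB
  refine ⟨min (εA / 2) (εB / 2), by positivity, fun r hr hrε => ?_⟩
  have hrA : r < εA / 2 := lt_of_lt_of_le hrε (min_le_left _ _)
  have hrB : r < εB / 2 := lt_of_lt_of_le hrε (min_le_right _ _)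
  -- differentiability on closed balls
  have hGAd : DifferentiableOn ℂ (GA l κ m) (Metric.closedBall (κ m) (εA / 2)) := by
    intro μ hμ
    have hμ' : μ ∈ Metric.ball (κ m) εA :=
      Metric.closedBall_subset_ball (by linarith) hμ
    obtain ⟨⟨h1, h2, h3, h4, h5⟩, h6⟩ := hballA μ hμ'
    exact (GA_diff l κ m h1 h2 h3 h4 h5 h6).differentiableWithinAt
  have hGBd : DifferentiableOn ℂ (GB l κ m) (Metric.closedBall ((κ m)⁻¹) (εB / 2)) := by
    intro μ hμ
    have hμ' : μ ∈ Metric.ball ((κ m)⁻¹) εB :=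
      Metric.closedBall_subset_ball (by linarith) hμ
    obtain ⟨⟨h1, h2, h3, h4, h5⟩, h6⟩ := hballB μ hμ'
    exact (GB_diff l κ m h1 h2 h3 h4 h5 h6).differentiableWithinAt
  -- circle integrals
  have hIA : (∮ μ in C(κ m, r), Ups l κ m m (l + 1) μ)
      = (2 * Real.pi * I) * GA l κ m (κ m) := by
    refine cauchy_aux _ _ _ _ r hr hrA hGAd fun μ hμ => ?_
    have hμball : μ ∈ Metric.ball (κ m) εA := by
      rw [Metric.mem_sphere] at hμ
      rw [Metric.mem_ball, hμ]
      linarith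
    obtain ⟨⟨h1, h2, _, _, _⟩, _⟩ := hballA μ hμball
    have hμa : μ ≠ κ m := by
      intro h
      rw [Metric.mem_sphere, h, dist_self] at hμ
      exact hr.ne' hμ.symm
    exact ups_eq_A l κ hm hμa h1 h2
  have hIB : (∮ μ in C((κ m)⁻¹, r), Ups l κ m m (l + 1) μ)
      = (2 * Real.pi * I) * GB l κ m ((κ m)⁻¹) := by
    refine cauchy_aux _ _ _ _ r hr hrB hGBd fun μ hμ => ?_
    have hμball : μ ∈ Metric.ball ((κ m)⁻¹) εB := by
      rw [Metric.mem_sphere] at hμ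
      rw [Metric.mem_ball, hμ]
      linarith
    obtain ⟨⟨h1, h2, _, _, _⟩, _⟩ := hballB μ hμball
    have hμa : μ ≠ (κ m)⁻¹ := by
      intro h
      rw [Metric.mem_sphere, h, dist_self] at hμ
      exact hr.ne' hμ.symm
    exact ups_eq_B l κ hm hμa h1 h2
  rw [hIA, hIB, GA_val l κ m ha0, GB_val l κ m ha0]
  have h2pi : (2 * (Real.pi : ℂ) * I) ≠ 0 := by
    refine mul_ne_zero (mul_ne_zero two_ne_zero ?_) I_ne_zero
    exact_mod_cast Complex.ofReal_ne_zero.2 Real.pi_ne_zero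
  field_simp
  norm_num
end

section
/- Let m ∈ {1, …, l} and let i, j, k ∈ {1, …, l+1} be indices such that at most one of i, j, k equals m. Then the sum of the residues of Υ_{ijk} at μ = κ_m and at μ = κ_m^{−1} is 0. Precisely: there exists ε > 0 such that for every r with 0 < r < ε, (2πi)^{−1}·(∮_{|μ−κ_m|=r} Υ_{ijk}(μ) dμ + ∮_{|μ−κ_m^{−1}|=r} Υ_{ijk}(μ) dμ) = 0. In particular, if i, j, k ∈ {1, …, l} are pairwise distinct, all such residue pair-sums vanish. -/
open Complex Filter Topology

/-! ### Auxiliary definitions -/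

/-- The part of `D(μ)` not singular at `κ_m` nor at `κ_m⁻¹`. -/
noncomputable def upsRest (l : ℕ) (κ : ℕ → ℂ) (m : ℕ) (μ : ℂ) : ℂ :=
  (∑ r ∈ (Finset.Icc 1 l).erase m, (1 / (μ - κ r) + 1 / (μ - (κ r)⁻¹)))
    - ((l : ℂ) - 2) / μ - 4 * μ / (μ ^ 2 - 1)

/-- Modified factor: the `m`-th factor multiplied by `(μ - a)` (so that its pole
at `a` is removed), all other factors unchanged. -/
noncomputable def hFactor (l : ℕ) (κ : ℕ → ℂ) (m : ℕ) (a b p q : ℂ) (n : ℕ)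
    (μ : ℂ) : ℂ :=
  if n = m then p + q * (μ - a) / (μ - b) else upsFactor l κ n μ

/-- The denominator `D(μ)·(μ - a)` rewritten so as to be analytic near `a`. -/
noncomputable def dmFun (l : ℕ) (κ : ℕ → ℂ) (m : ℕ) (a b : ℂ) (μ : ℂ) : ℂ :=
  1 + (μ - a) * (1 / (μ - b) + upsRest l κ m μ)

/-- The analytic extension of `Ups` near `a`. -/
noncomputable def gFun (l : ℕ) (κ : ℕ → ℂ) (m : ℕ) (a b p q : ℂ) (i j k : ℕ)
    (μ : ℂ) : ℂ :=
  -(hFactor l κ m a b p q i μ * hFactor l κ m a b p q j μ *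
      hFactor l κ m a b p q k μ *
      (if i = m ∨ j = m ∨ k = m then 1 else μ - a)) /
    (2 * μ ^ 2 * dmFun l κ m a b μ)

lemma upsD_split (l : ℕ) (κ : ℕ → ℂ) (m : ℕ) (hm : m ∈ Finset.Icc 1 l) (μ : ℂ) :
    upsD l κ μ = 1 / (μ - κ m) + 1 / (μ - (κ m)⁻¹) + upsRest l κ m μ := by
  unfold upsD upsRest
  rw [← Finset.add_sum_erase _ _ hm]
  ring

lemma sq_sub_one_ne (μ : ℂ) (h1 : μ ≠ 1) (hn1 : μ ≠ -1) : μ ^ 2 - 1 ≠ 0 := by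
  have h : μ ^ 2 - 1 = (μ - 1) * (μ + 1) := by ring
  rw [h]
  exact mul_ne_zero (sub_ne_zero.2 h1)
    (fun h => hn1 (eq_neg_of_add_eq_zero_left h))

lemma diffAt_upsRest (l : ℕ) (κ : ℕ → ℂ) (m : ℕ) (μ : ℂ)
    (h0 : μ ≠ 0) (h1 : μ ≠ 1) (hn1 : μ ≠ -1)
    (hr : ∀ r ∈ (Finset.Icc 1 l).erase m, μ ≠ κ r ∧ μ ≠ (κ r)⁻¹) :
    DifferentiableAt ℂ (upsRest l κ m) μ := by
  have hsq := sq_sub_one_ne μ h1 hn1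
  unfold upsRest
  apply DifferentiableAt.sub
  apply DifferentiableAt.sub
  · refine DifferentiableAt.fun_sum fun r hrs => DifferentiableAt.add ?_ ?_
    · exact (differentiableAt_const _).div (differentiableAt_id.sub_const _)
        (sub_ne_zero.2 (hr r hrs).1)
    · exact (differentiableAt_const _).div (differentiableAt_id.sub_const _)
        (sub_ne_zero.2 (hr r hrs).2)
  · exact (differentiableAt_const _).div differentiableAt_id h0
  · exact ((differentiableAt_const _).mul differentiableAt_id).div
      ((differentiableAt_pow 2).sub_const _) hsq

lemma diffAt_dmFun (l : ℕ) (κ : ℕ → ℂ) (m : ℕ) (a b : ℂ) (μ : ℂ)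
    (h0 : μ ≠ 0) (h1 : μ ≠ 1) (hn1 : μ ≠ -1) (hb : μ ≠ b)
    (hr : ∀ r ∈ (Finset.Icc 1 l).erase m, μ ≠ κ r ∧ μ ≠ (κ r)⁻¹) :
    DifferentiableAt ℂ (dmFun l κ m a b) μ := by
  unfold dmFun
  have hbdiff : DifferentiableAt ℂ (fun μ : ℂ => 1 / (μ - b)) μ :=
    (differentiableAt_const _).div (differentiableAt_id.sub_const _)
      (sub_ne_zero.2 hb)
  exact (differentiableAt_const _).add
    ((differentiableAt_id.sub_const _).mul
      (hbdiff.add (diffAt_upsRest l κ m μ h0 h1 hn1 hr)))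

lemma hFactor_ne (l : ℕ) (κ : ℕ → ℂ) (m : ℕ) (a b p q : ℂ) (n : ℕ)
    (h : n ≠ m) (μ : ℂ) : hFactor l κ m a b p q n μ = upsFactor l κ n μ := by
  simp [hFactor, h]

lemma hFactor_eq (l : ℕ) (κ : ℕ → ℂ) (m : ℕ) (a b p q : ℂ) (n : ℕ)
    (h : n = m) (μ : ℂ) :
    hFactor l κ m a b p q n μ = p + q * (μ - a) / (μ - b) := by
  simp [hFactor, h]

lemma diffAt_hFactor (l : ℕ) (κ : ℕ → ℂ) (m : ℕ) (a b p q : ℂ) (n : ℕ)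
    (hn : n ∈ Finset.Icc 1 (l + 1)) (μ : ℂ) (hb : μ ≠ b)
    (hr : ∀ r ∈ (Finset.Icc 1 l).erase m, μ ≠ κ r ∧ μ ≠ (κ r)⁻¹) :
    DifferentiableAt ℂ (hFactor l κ m a b p q n) μ := by
  unfold hFactor
  by_cases h : n = m
  · simp only [h, ite_true]
    exact (differentiableAt_const _).add
      (((differentiableAt_const _).mul (differentiableAt_id.sub_const _)).div
        (differentiableAt_id.sub_const _) (sub_ne_zero.2 hb))
  · simp only [h, ite_false]
    unfold upsFactor
    by_cases hnl : n ≤ l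
    · simp only [hnl, ite_true]
      have hmem : n ∈ (Finset.Icc 1 l).erase m := by
        simp only [Finset.mem_erase, Finset.mem_Icc]
        exact ⟨h, (Finset.mem_Icc.1 hn).1, hnl⟩
      refine DifferentiableAt.add ?_ ?_
      · exact (differentiableAt_const (-κ n)).div
          (differentiableAt_id.sub_const _)
          (sub_ne_zero.2 (hr n hmem).1)
      · exact (differentiableAt_const _).div (differentiableAt_id.sub_const _)
          (sub_ne_zero.2 (hr n hmem).2)
    · simp only [hnl, ite_false]
      exact differentiableAt_const _

/-- Pointwise identity: away from `a` and `b`, `Ups = gFun`. -/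
lemma ups_eq_gFun (l : ℕ) (κ : ℕ → ℂ) (m : ℕ) (i j k : ℕ)
    (hcount : (if i = m then 1 else 0) + (if j = m then 1 else 0) +
        (if k = m then 1 else 0) ≤ 1)
    (a b p q : ℂ)
    (hF : ∀ μ : ℂ, upsFactor l κ m μ = p / (μ - a) + q / (μ - b))
    (hDs : ∀ μ : ℂ, upsD l κ μ = 1 / (μ - a) + 1 / (μ - b) + upsRest l κ m μ)
    (μ : ℂ) (hμa : μ ≠ a) (hμb : μ ≠ b) :
    Ups l κ i j k μ = gFun l κ m a b p q i j k μ := by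
  have ha : μ - a ≠ 0 := sub_ne_zero.2 hμa
  have hb : μ - b ≠ 0 := sub_ne_zero.2 hμb
  have key : upsFactor l κ m μ * (μ - a) = p + q * (μ - a) / (μ - b) := by
    rw [hF]
    field_simp
  have hden : 2 * μ ^ 2 * upsD l κ μ * (μ - a)
      = 2 * μ ^ 2 * dmFun l κ m a b μ := by
    rw [hDs]
    unfold dmFun
    field_simp
    ring
  have hmain : Ups l κ i j k μ
      = -(upsFactor l κ i μ * upsFactor l κ j μ * upsFactor l κ k μ) * (μ - a)
        / (2 * μ ^ 2 * upsD l κ μ * (μ - a)) := by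
    unfold Ups
    rw [mul_div_mul_right _ _ ha]
  rw [hmain, hden]
  unfold gFun
  congr 1
  by_cases hi' : i = m <;> by_cases hj' : j = m <;> by_cases hk' : k = m
  · simp [hi', hj', hk'] at hcount
  · simp [hi', hj', hk'] at hcount
  · simp [hi', hj', hk'] at hcount
  · rw [hFactor_eq l κ m a b p q i hi', hFactor_ne l κ m a b p q j hj',
      hFactor_ne l κ m a b p q k hk', if_pos (Or.inl hi')]
    have key' : upsFactor l κ i μ * (μ - a) = p + q * (μ - a) / (μ - b) := by
      rw [hi']; exact key
    linear_combination (-(upsFactor l κ j μ * upsFactor l κ k μ)) * key'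
  · simp [hi', hj', hk'] at hcount
  · rw [hFactor_eq l κ m a b p q j hj', hFactor_ne l κ m a b p q i hi',
      hFactor_ne l κ m a b p q k hk', if_pos (Or.inr (Or.inl hj'))]
    have key' : upsFactor l κ j μ * (μ - a) = p + q * (μ - a) / (μ - b) := by
      rw [hj']; exact key
    linear_combination (-(upsFactor l κ i μ * upsFactor l κ k μ)) * key'
  · rw [hFactor_eq l κ m a b p q k hk', hFactor_ne l κ m a b p q i hi',
      hFactor_ne l κ m a b p q j hj', if_pos (Or.inr (Or.inr hk'))]
    have key' : upsFactor l κ k μ * (μ - a) = p + q * (μ - a) / (μ - b) := by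
      rw [hk']; exact key
    linear_combination (-(upsFactor l κ i μ * upsFactor l κ j μ)) * key'
  · rw [hFactor_ne l κ m a b p q i hi', hFactor_ne l κ m a b p q j hj',
      hFactor_ne l κ m a b p q k hk', if_neg (by simp [hi', hj', hk'])]
    ring

/-- The circle integral of `Ups` around `a` vanishes for all small radii,
where `a` is one of `κ m`, `(κ m)⁻¹` and `b` is the other one. -/
lemma circle_zero (l : ℕ) (κ : ℕ → ℂ) (m : ℕ)
    (i j k : ℕ) (hi : i ∈ Finset.Icc 1 (l + 1)) (hj : j ∈ Finset.Icc 1 (l + 1))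
    (hk : k ∈ Finset.Icc 1 (l + 1))
    (hcount : (if i = m then 1 else 0) + (if j = m then 1 else 0) +
        (if k = m then 1 else 0) ≤ 1)
    (a b p q : ℂ)
    (hF : ∀ μ : ℂ, upsFactor l κ m μ = p / (μ - a) + q / (μ - b))
    (hDs : ∀ μ : ℂ, upsD l κ μ = 1 / (μ - a) + 1 / (μ - b) + upsRest l κ m μ)
    (ha0 : a ≠ 0) (ha1 : a ≠ 1) (han1 : a ≠ -1) (hab : a ≠ b)
    (har : ∀ r ∈ (Finset.Icc 1 l).erase m, a ≠ κ r ∧ a ≠ (κ r)⁻¹) :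
    ∃ ε > (0 : ℝ), ∀ r : ℝ, 0 < r → r < ε →
      (∮ μ in C(a, r), Ups l κ i j k μ) = 0 := by
  have hdma : dmFun l κ m a b a = 1 := by simp [dmFun]
  have hGood : ∀ᶠ μ in 𝓝 a, (μ ≠ 0 ∧ μ ≠ 1 ∧ μ ≠ -1 ∧ μ ≠ b) ∧
      (∀ r ∈ (Finset.Icc 1 l).erase m, μ ≠ κ r ∧ μ ≠ (κ r)⁻¹) ∧
      dmFun l κ m a b μ ≠ 0 := by
    have e0 := eventually_ne_nhds ha0
    have e1 := eventually_ne_nhds ha1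
    have en1 := eventually_ne_nhds han1
    have eb := eventually_ne_nhds hab
    have er : ∀ᶠ μ in 𝓝 a, ∀ r ∈ (Finset.Icc 1 l).erase m,
        μ ≠ κ r ∧ μ ≠ (κ r)⁻¹ := by
      refine (eventually_all_finset _).2 fun r hrs => ?_
      exact (eventually_ne_nhds (har r hrs).1).and
        (eventually_ne_nhds (har r hrs).2)
    have edm : ∀ᶠ μ in 𝓝 a, dmFun l κ m a b μ ≠ 0 :=
      (diffAt_dmFun l κ m a b a ha0 ha1 han1 hab har).continuousAt.eventually_ne
        (by rw [hdma]; norm_num)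
    filter_upwards [e0, e1, en1, eb, er, edm] with μ h0 h1 hn1 hb hr hdm
    exact ⟨⟨h0, h1, hn1, hb⟩, hr, hdm⟩
  rw [Metric.eventually_nhds_iff_ball] at hGood
  obtain ⟨ε, hε, hball⟩ := hGood
  refine ⟨ε, hε, fun r hr hrε => ?_⟩
  have hgdiff : ∀ μ ∈ Metric.ball a ε,
      DifferentiableAt ℂ (gFun l κ m a b p q i j k) μ := by
    intro μ hμ
    obtain ⟨⟨h0, h1, hn1, hb⟩, hrmem, hdm⟩ := hball μ hμ
    unfold gFun
    refine DifferentiableAt.div (DifferentiableAt.neg ?_) ?_ ?_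
    · refine (((diffAt_hFactor l κ m a b p q i hi μ hb hrmem).mul
        (diffAt_hFactor l κ m a b p q j hj μ hb hrmem)).mul
        (diffAt_hFactor l κ m a b p q k hk μ hb hrmem)).mul ?_
      by_cases h : i = m ∨ j = m ∨ k = m
      · simp only [h, ite_true]; exact differentiableAt_const _
      · simp only [h, ite_false]
        exact differentiableAt_id.sub_const _
    · exact ((differentiableAt_const _).mul (differentiableAt_pow 2)).mul
        (diffAt_dmFun l κ m a b μ h0 h1 hn1 hb hrmem)
    · exact mul_ne_zero (mul_ne_zero two_ne_zero (pow_ne_zero 2 h0)) hdm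
  have hEq : Set.EqOn (Ups l κ i j k) (gFun l κ m a b p q i j k)
      (Metric.sphere a r) := by
    intro μ hμ
    have hμball : μ ∈ Metric.ball a ε := by
      rw [Metric.mem_sphere] at hμ
      rw [Metric.mem_ball, hμ]
      exact hrε
    obtain ⟨⟨_, _, _, hb⟩, _, _⟩ := hball μ hμball
    have hμa : μ ≠ a := by
      intro h
      rw [Metric.mem_sphere, h, dist_self] at hμ
      exact hr.ne hμ
    exact ups_eq_gFun l κ m i j k hcount a b p q hF hDs μ hμa hb
  rw [circleIntegral.integral_congr hr.le hEq]
  exact circleIntegral_eq_zero_of_differentiable_on_off_countable hr.le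
    Set.countable_empty
    (fun μ hμ => (hgdiff μ (Metric.closedBall_subset_ball hrε hμ)
      ).continuousAt.continuousWithinAt)
    (fun z hz => hgdiff z (Metric.ball_subset_ball hrε.le hz.1))

/-- Let `m ∈ {1, …, l}` and let `i, j, k ∈ {1, …, l+1}` be
such that at most one of `i, j, k` equals `m`.  Then the sum of the residues
of `Υ_{ijk}` at `μ = κ_m` and at `μ = κ_m⁻¹` is `0`, the residues being
expressed as circle integrals of sufficiently small radius.  (In particular,
for pairwise distinct `i, j, k ∈ {1, …, l}` all such residue pair-sums
vanish.) -/
theorem stmt8 (l : ℕ) (hl : 3 ≤ l) (κ : ℕ → ℂ)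
    (hκ : ∀ r ∈ Finset.Icc 1 l, κ r ≠ 0 ∧ κ r ≠ 1 ∧ κ r ≠ -1)
    (hκ' : ∀ r ∈ Finset.Icc 1 l, ∀ s ∈ Finset.Icc 1 l, r ≠ s →
      κ r ≠ κ s ∧ κ r * κ s ≠ 1)
    (m : ℕ) (hm : m ∈ Finset.Icc 1 l)
    (i j k : ℕ) (hi : i ∈ Finset.Icc 1 (l + 1)) (hj : j ∈ Finset.Icc 1 (l + 1))
    (hk : k ∈ Finset.Icc 1 (l + 1))
    (hcount : (if i = m then 1 else 0) + (if j = m then 1 else 0) +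
        (if k = m then 1 else 0) ≤ 1) :
    ∃ ε > (0 : ℝ), ∀ r : ℝ, 0 < r → r < ε →
      (2 * Real.pi * Complex.I)⁻¹ *
        ((∮ μ in C(κ m, r), Ups l κ i j k μ) +
          (∮ μ in C((κ m)⁻¹, r), Ups l κ i j k μ)) = 0 := by
  have hml : m ≤ l := (Finset.mem_Icc.1 hm).2
  obtain ⟨h0, h1, hn1⟩ := hκ m hm
  have hsq : κ m * κ m ≠ 1 := by
    intro h
    have h' : (κ m - 1) * (κ m + 1) = 0 := by linear_combination h
    rcases mul_eq_zero.1 h' with h'' | h''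
    · exact h1 (by linear_combination h'')
    · exact hn1 (by linear_combination h'')
  have hainv : κ m ≠ (κ m)⁻¹ := by
    intro h
    apply hsq
    nth_rewrite 2 [h]
    exact mul_inv_cancel₀ h0
  have hF1 : ∀ μ : ℂ, upsFactor l κ m μ
      = (-κ m) / (μ - κ m) + (κ m)⁻¹ / (μ - (κ m)⁻¹) := by
    intro μ
    unfold upsFactor
    rw [if_pos hml]
  have hDs1 := upsD_split l κ m hm
  have har1 : ∀ r ∈ (Finset.Icc 1 l).erase m, κ m ≠ κ r ∧ κ m ≠ (κ r)⁻¹ := by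
    intro r hrs
    rw [Finset.mem_erase] at hrs
    have hne : m ≠ r := fun h => hrs.1 h.symm
    have h2 := hκ' m hm r hrs.2 hne
    refine ⟨h2.1, fun h => h2.2 ?_⟩
    rw [h]
    exact inv_mul_cancel₀ (hκ r hrs.2).1
  obtain ⟨ε₁, hε₁, hint₁⟩ := circle_zero l κ m i j k hi hj hk hcount
    (κ m) (κ m)⁻¹ (-κ m) (κ m)⁻¹ hF1 hDs1 h0 h1 hn1 hainv har1
  have hF2 : ∀ μ : ℂ, upsFactor l κ m μ
      = (κ m)⁻¹ / (μ - (κ m)⁻¹) + (-κ m) / (μ - κ m) := by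
    intro μ
    unfold upsFactor
    rw [if_pos hml]
    ring
  have hDs2 : ∀ μ : ℂ, upsD l κ μ
      = 1 / (μ - (κ m)⁻¹) + 1 / (μ - κ m) + upsRest l κ m μ := by
    intro μ
    rw [upsD_split l κ m hm]
    ring
  have hi0 : (κ m)⁻¹ ≠ 0 := inv_ne_zero h0
  have hi1 : (κ m)⁻¹ ≠ 1 := by
    intro h
    exact h1 (by rw [← inv_inv (κ m), h, inv_one])
  have hin1 : (κ m)⁻¹ ≠ -1 := by
    intro h
    apply hn1
    rw [← inv_inv (κ m), h]
    norm_num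
  have har2 : ∀ r ∈ (Finset.Icc 1 l).erase m,
      (κ m)⁻¹ ≠ κ r ∧ (κ m)⁻¹ ≠ (κ r)⁻¹ := by
    intro r hrs
    rw [Finset.mem_erase] at hrs
    have hne : m ≠ r := fun h => hrs.1 h.symm
    have h2 := hκ' m hm r hrs.2 hne
    constructor
    · intro h
      apply h2.2
      rw [← h]
      exact mul_inv_cancel₀ h0
    · exact fun h => h2.1 (inv_injective h)
  obtain ⟨ε₂, hε₂, hint₂⟩ := circle_zero l κ m i j k hi hj hk hcount
    (κ m)⁻¹ (κ m) (κ m)⁻¹ (-κ m) hF2 hDs2 hi0 hi1 hin1 hainv.symm har2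
  refine ⟨min ε₁ ε₂, lt_min hε₁ hε₂, fun r hr hrε => ?_⟩
  rw [hint₁ r hr (hrε.trans_le (min_le_left _ _)),
    hint₂ r hr (hrε.trans_le (min_le_right _ _))]
  simp
end
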